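/- arXiv:2002.08695 — 5 statements merged into one kernel-verified Lean document; each statement's English description precedes it below -/
import Mathlib

section
/- Let I, J ≥ 1 be integers, let μ ∈ ℝ^I be a probability vector with all entries strictly positive, let C ∈ ℝ^{I×J} be a cost matrix, and let ε > 0. Assume the normalizing constant Z := Σ_{i=1}^I exp(−C_{ij}/ε) does not depend on j, and define the transition kernel κ_{ij} = exp(−C_{ij}/ε)/Z. For a probability vector ν ∈ ℝ^J define the log-likelihood L(ν) = Σ_{i=1}^I μ_i log(Σ_{j=1}^J κ_{ij} ν_j) and the entropic optimal transport cost OT_ε(μ,ν) = min over matrices π ∈ ℝ^{I×J} with nonnegative entries, row sums (Σ_j π_{ij}) = μ_i and column sums (Σ_i π_{ij}) = ν_j, of Σ_{i,j} C_{ij} π_{ij} + ε KL(π, μ⊗ν), where (μ⊗ν)_{ij} = μ_i ν_j. Then a probability vector ν̂ ∈ ℝ^J maximizes L over the probability simplex if and only if ν̂ minimizes ν ↦ OT_ε(μ,ν) over the probability simplex. -/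
open Real BigOperators Finset

/-- Kullback–Leibler divergence between two matrices (nonnegative arrays indexed by
`Fin I × Fin J`), with the convention `0 log 0 = 0`. -/
noncomputable def KLmat {I J : ℕ} (p q : Fin I → Fin J → ℝ) : ℝ :=
  ∑ i, ∑ j, p i j * Real.log (p i j / q i j)

/-- The entropic optimal transport cost between `μ` and `ν` for cost matrix `C` and
regularization `ε`: infimum over couplings `π` of `⟨C, π⟩ + ε KL(π, μ ⊗ ν)`. -/
noncomputable def OTeps {I J : ℕ} (C : Fin I → Fin J → ℝ) (ε : ℝ)
    (μ : Fin I → ℝ) (ν : Fin J → ℝ) : ℝ :=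
  sInf {v : ℝ | ∃ plan : Fin I → Fin J → ℝ,
    (∀ i j, 0 ≤ plan i j) ∧ (∀ i, ∑ j, plan i j = μ i) ∧ (∀ j, ∑ i, plan i j = ν j) ∧
    v = ∑ i, ∑ j, C i j * plan i j + ε * KLmat plan (fun i j => μ i * ν j)}

set_option linter.unusedVariables false

lemma mul_log_div_ge {p q : ℝ} (hp : 0 ≤ p) (hq : 0 ≤ q) (h : 0 < p → 0 < q) :
    p - q ≤ p * Real.log (p / q) := by
  rcases eq_or_lt_of_le hp with h0 | h0
  · simp [← h0]; linarith
  · have hq' := h h0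
    have h2 := Real.log_le_sub_one_of_pos (x := q/p) (by positivity)
    have hlog : Real.log (p/q) = - Real.log (q/p) := by
      rw [← Real.log_inv]; congr 1; field_simp
    have hpq : p * (q/p) = q := by field_simp
    nlinarith [mul_le_mul_of_nonneg_left h2 (le_of_lt h0)]

lemma exists_pos_coord {J : ℕ} (ν : Fin J → ℝ) (h0 : ∀ j, 0 ≤ ν j) (h1 : ∑ j, ν j = 1) :
    ∃ j, 0 < ν j := by
  by_contra h
  push_neg at h
  have : ∑ j, ν j ≤ 0 := Finset.sum_nonpos (fun j _ => h j)
  linarith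

lemma r_pos {I J : ℕ} (κ : Fin I → Fin J → ℝ) (hκ : ∀ i j, 0 < κ i j)
    (ν : Fin J → ℝ) (h0 : ∀ j, 0 ≤ ν j) (h1 : ∑ j, ν j = 1) (i : Fin I) :
    0 < ∑ j, κ i j * ν j := by
  obtain ⟨j, hj⟩ := exists_pos_coord ν h0 h1
  exact Finset.sum_pos' (fun j' _ => mul_nonneg (hκ i j').le (h0 j'))
    ⟨j, Finset.mem_univ j, mul_pos (hκ i j) hj⟩

lemma q_row_sum {I J : ℕ} (μ : Fin I → ℝ) (κ : Fin I → Fin J → ℝ)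
    (ν : Fin J → ℝ) (i : Fin I) (hr : 0 < ∑ j, κ i j * ν j) :
    ∑ j, μ i * κ i j * ν j / (∑ j', κ i j' * ν j') = μ i := by
  have : ∀ j, μ i * κ i j * ν j / (∑ j', κ i j' * ν j')
      = (μ i / (∑ j', κ i j' * ν j')) * (κ i j * ν j) := by
    intro j; ring
  rw [Finset.sum_congr rfl (fun j _ => this j), ← Finset.mul_sum]
  field_simp

lemma lower_bound {I J : ℕ} (μ : Fin I → ℝ) (hμpos : ∀ i, 0 < μ i) (hμ1 : ∑ i, μ i = 1)
    (κ : Fin I → Fin J → ℝ) (hκ : ∀ i j, 0 < κ i j)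
    (C : Fin I → Fin J → ℝ) (ε lZ : ℝ) (hε : 0 < ε)
    (hC : ∀ i j, C i j = -ε * (Real.log (κ i j) + lZ))
    (ν : Fin J → ℝ) (hν0 : ∀ j, 0 ≤ ν j) (hν1 : ∑ j, ν j = 1)
    (plan : Fin I → Fin J → ℝ) (hp0 : ∀ i j, 0 ≤ plan i j)
    (hrow : ∀ i, ∑ j, plan i j = μ i) (hcol : ∀ j, ∑ i, plan i j = ν j) :
    -ε * (∑ i, μ i * Real.log (∑ j, κ i j * ν j)) - ε * lZ ≤
      ∑ i, ∑ j, C i j * plan i j + ε * KLmat plan (fun i j => μ i * ν j) := by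
  set r : Fin I → ℝ := fun i => ∑ j, κ i j * ν j with hr_def
  have hr : ∀ i, 0 < r i := fun i => r_pos κ hκ ν hν0 hν1 i
  set q : Fin I → Fin J → ℝ := fun i j => μ i * κ i j * ν j / r i with hq_def
  have hq0 : ∀ i j, 0 ≤ q i j := fun i j =>
    div_nonneg (mul_nonneg (mul_nonneg (hμpos i).le (hκ i j).le) (hν0 j)) (hr i).le
  have hqrow : ∀ i, ∑ j, q i j = μ i := fun i => q_row_sum μ κ ν i (hr i)
  -- pointwise inequality
  have key : ∀ i j,
      ε * (plan i j - q i j) - ε * (plan i j * Real.log (r i)) - ε * lZ * plan i j ≤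
        C i j * plan i j + ε * (plan i j * Real.log (plan i j / (μ i * ν j))) := by
    intro i j
    rcases eq_or_lt_of_le (hp0 i j) with h0 | h0
    · rw [← h0]
      simp only [mul_zero, zero_mul, sub_zero, zero_sub, add_zero]
      have : 0 ≤ ε * q i j := mul_nonneg hε.le (hq0 i j)
      linarith
    · have hνj : 0 < ν j := by
        rw [← hcol j]
        calc (0:ℝ) < plan i j := h0
        _ ≤ ∑ i', plan i' j :=
          Finset.single_le_sum (fun i' _ => hp0 i' j) (Finset.mem_univ i)
      have hq' : 0 < q i j :=
        div_pos (mul_pos (mul_pos (hμpos i) (hκ i j)) hνj) (hr i)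
      have hkey : plan i j - q i j ≤ plan i j * Real.log (plan i j / q i j) :=
        mul_log_div_ge h0.le (hq0 i j) (fun _ => hq')
      have e1 : Real.log (plan i j / (μ i * ν j))
          = Real.log (plan i j) - Real.log (μ i) - Real.log (ν j) := by
        rw [Real.log_div (ne_of_gt h0) (ne_of_gt (mul_pos (hμpos i) hνj)),
          Real.log_mul (ne_of_gt (hμpos i)) (ne_of_gt hνj)]
        ring
      have e2 : Real.log (plan i j / q i j)
          = Real.log (plan i j) -
            (Real.log (μ i) + Real.log (κ i j) + Real.log (ν j) - Real.log (r i)) := by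
        rw [Real.log_div (ne_of_gt h0) (ne_of_gt hq')]
        have : Real.log (q i j) =
            Real.log (μ i) + Real.log (κ i j) + Real.log (ν j) - Real.log (r i) := by
          show Real.log (μ i * κ i j * ν j / r i) = _
          rw [Real.log_div (ne_of_gt (mul_pos (mul_pos (hμpos i) (hκ i j)) hνj)) (ne_of_gt (hr i)),
            Real.log_mul (ne_of_gt (mul_pos (hμpos i) (hκ i j))) (ne_of_gt hνj),
            Real.log_mul (ne_of_gt (hμpos i)) (ne_of_gt (hκ i j))]
        rw [this]
      rw [hC i j, e1]
      rw [e2] at hkey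
      nlinarith [mul_le_mul_of_nonneg_left hkey hε.le]
  -- sum up
  have expand : ∑ i, ∑ j, C i j * plan i j + ε * KLmat plan (fun i j => μ i * ν j)
      = ∑ i, ∑ j, (C i j * plan i j + ε * (plan i j * Real.log (plan i j / (μ i * ν j)))) := by
    rw [KLmat, Finset.mul_sum, ← Finset.sum_add_distrib]
    refine Finset.sum_congr rfl (fun i _ => ?_)
    rw [Finset.mul_sum, ← Finset.sum_add_distrib]
  have hin : ∀ i, ∑ j, (ε * (plan i j - q i j) - ε * (plan i j * Real.log (r i))
      - ε * lZ * plan i j)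
      = ε * (μ i - μ i) - ε * (μ i * Real.log (r i)) - ε * lZ * μ i := by
    intro i
    rw [Finset.sum_sub_distrib, Finset.sum_sub_distrib, ← Finset.mul_sum,
      Finset.sum_sub_distrib, hrow, hqrow, ← Finset.mul_sum, ← Finset.sum_mul, hrow,
      ← Finset.mul_sum, hrow]
  have hsum : ∑ i, ∑ j, (ε * (plan i j - q i j) - ε * (plan i j * Real.log (r i))
      - ε * lZ * plan i j)
      = -ε * (∑ i, μ i * Real.log (r i)) - ε * lZ := by
    rw [Finset.sum_congr rfl (fun i _ => hin i)]
    rw [Finset.sum_sub_distrib, Finset.sum_sub_distrib, ← Finset.mul_sum, ← Finset.mul_sum,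
      ← Finset.mul_sum, hμ1]
    simp
  rw [expand, ← hsum]
  exact Finset.sum_le_sum fun i _ => Finset.sum_le_sum fun j _ => key i j

lemma value_at_q {I J : ℕ} (μ : Fin I → ℝ) (hμpos : ∀ i, 0 < μ i) (hμ1 : ∑ i, μ i = 1)
    (κ : Fin I → Fin J → ℝ) (hκ : ∀ i j, 0 < κ i j)
    (C : Fin I → Fin J → ℝ) (ε lZ : ℝ) (hε : 0 < ε)
    (hC : ∀ i j, C i j = -ε * (Real.log (κ i j) + lZ))
    (ν : Fin J → ℝ) (hν0 : ∀ j, 0 ≤ ν j)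
    (hr : ∀ i, 0 < ∑ j, κ i j * ν j) :
    ∑ i, ∑ j, C i j * (μ i * κ i j * ν j / (∑ j', κ i j' * ν j'))
      + ε * KLmat (fun i j => μ i * κ i j * ν j / (∑ j', κ i j' * ν j'))
          (fun i j => μ i * ν j)
      = -ε * (∑ i, μ i * Real.log (∑ j, κ i j * ν j)) - ε * lZ := by
  set r : Fin I → ℝ := fun i => ∑ j, κ i j * ν j with hr_def
  set q : Fin I → Fin J → ℝ := fun i j => μ i * κ i j * ν j / r i with hq_def
  have key : ∀ i j, C i j * q i j + ε * (q i j * Real.log (q i j / (μ i * ν j)))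
      = -ε * (q i j * Real.log (r i)) - ε * lZ * q i j := by
    intro i j
    rcases eq_or_lt_of_le (hν0 j) with h0 | h0
    · have hq0 : q i j = 0 := by
        show μ i * κ i j * ν j / r i = 0
        rw [← h0]; ring
      rw [hq0]; ring
    · have hq' : 0 < q i j := div_pos (mul_pos (mul_pos (hμpos i) (hκ i j)) h0) (hr i)
      have e1 : Real.log (q i j / (μ i * ν j)) = Real.log (κ i j) - Real.log (r i) := by
        have hμν : μ i * ν j ≠ 0 := ne_of_gt (mul_pos (hμpos i) h0)
        have : q i j / (μ i * ν j) = κ i j / r i := by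
          show μ i * κ i j * ν j / r i / (μ i * ν j) = κ i j / r i
          rw [div_div, mul_comm (r i) (μ i * ν j),
            show μ i * κ i j * ν j = μ i * ν j * κ i j by ring,
            mul_div_mul_left _ _ hμν]
        rw [this, Real.log_div (ne_of_gt (hκ i j)) (ne_of_gt (hr i))]
      rw [e1, hC i j]; ring
  have expand : ∑ i, ∑ j, C i j * q i j + ε * KLmat q (fun i j => μ i * ν j)
      = ∑ i, ∑ j, (C i j * q i j + ε * (q i j * Real.log (q i j / (μ i * ν j)))) := by
    rw [KLmat, Finset.mul_sum, ← Finset.sum_add_distrib]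
    refine Finset.sum_congr rfl (fun i _ => ?_)
    rw [Finset.mul_sum, ← Finset.sum_add_distrib]
  have hqrow : ∀ i, ∑ j, q i j = μ i := fun i => q_row_sum μ κ ν i (hr i)
  rw [expand, Finset.sum_congr rfl (fun i _ => Finset.sum_congr rfl (fun j _ => key i j))]
  have hin : ∀ i, ∑ j, (-ε * (q i j * Real.log (r i)) - ε * lZ * q i j)
      = -ε * (μ i * Real.log (r i)) - ε * lZ * μ i := by
    intro i
    have e : ∀ j, -ε * (q i j * Real.log (r i)) - ε * lZ * q i j
        = (-ε * Real.log (r i) - ε * lZ) * q i j := fun j => by ring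
    rw [Finset.sum_congr rfl (fun j _ => e j), ← Finset.mul_sum, hqrow]
    ring
  rw [Finset.sum_congr rfl (fun i _ => hin i), Finset.sum_sub_distrib, ← Finset.mul_sum,
    ← Finset.mul_sum, hμ1]
  ring

lemma log_one_add_ge {u : ℝ} (hu : -(1/2:ℝ) ≤ u) : u - 2*u^2 ≤ Real.log (1+u) := by
  have h1 : 0 < 1 + u := by linarith
  have h2 := Real.log_le_sub_one_of_pos (x := (1+u)⁻¹) (by positivity)
  rw [Real.log_inv] at h2
  have hv : (1+u) * (1+u)⁻¹ = 1 := mul_inv_cancel₀ (ne_of_gt h1)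
  nlinarith [sq_nonneg u, mul_nonneg (sq_nonneg u) (by linarith : (0:ℝ) ≤ 1 + 2*u), h2]

lemma kkt_g_le_one {I J : ℕ} (μ : Fin I → ℝ) (hμpos : ∀ i, 0 < μ i) (hμ1 : ∑ i, μ i = 1)
    (κ : Fin I → Fin J → ℝ) (hκ : ∀ i j, 0 < κ i j)
    (νh : Fin J → ℝ) (h0 : ∀ j, 0 ≤ νh j) (h1 : ∑ j, νh j = 1)
    (hmax : ∀ ν : Fin J → ℝ, (∀ j, 0 ≤ ν j) → ∑ j, ν j = 1 →
      (∑ i, μ i * Real.log (∑ j, κ i j * ν j)) ≤ ∑ i, μ i * Real.log (∑ j, κ i j * νh j))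
    (j : Fin J) :
    ∑ i, μ i * (κ i j / (∑ j', κ i j' * νh j')) ≤ 1 := by
  set r : Fin I → ℝ := fun i => ∑ j', κ i j' * νh j' with hr_def
  have hr : ∀ i, 0 < r i := fun i => r_pos κ hκ νh h0 h1 i
  by_contra hgt
  push_neg at hgt
  set x : Fin I → ℝ := fun i => κ i j / r i - 1 with hx_def
  have hx1 : ∀ i, -1 < x i := by
    intro i
    have : 0 < κ i j / r i := div_pos (hκ i j) (hr i)
    simp only [hx_def]
    linarith
  set B : ℝ := 1 + ∑ i, |x i| with hB_def
  have hB1 : 1 ≤ B := by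
    have : 0 ≤ ∑ i, |x i| := Finset.sum_nonneg (fun i _ => abs_nonneg _)
    simp only [hB_def]; linarith
  have hB0 : 0 < B := by linarith
  have hxB : ∀ i, |x i| ≤ B := by
    intro i
    have h := Finset.single_le_sum (f := fun i => |x i|) (fun i _ => abs_nonneg _)
      (Finset.mem_univ i)
    simp only [hB_def]; linarith
  set δ : ℝ := (∑ i, μ i * (κ i j / r i)) - 1 with hδ_def
  have hδ0 : 0 < δ := by simp only [hδ_def]; linarith
  set t : ℝ := min (1/(2*B)) (δ/(4*B^2)) with ht_def
  have ht0 : 0 < t := lt_min (by positivity) (by positivity)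
  have htB : t ≤ 1/(2*B) := min_le_left _ _
  have htδ : t ≤ δ/(4*B^2) := min_le_right _ _
  have ht1 : t ≤ 1 := by
    have h2B : 2 ≤ 2*B := by linarith
    have : 1/(2*B) ≤ 1/2 := by
      apply one_div_le_one_div_of_le (by norm_num) h2B
    linarith [htB]
  have htx : ∀ i, |t * x i| ≤ 1/2 := by
    intro i
    rw [abs_mul, abs_of_pos ht0]
    calc t * |x i| ≤ (1/(2*B)) * B := by
          apply mul_le_mul htB (hxB i) (abs_nonneg _) (by positivity)
    _ = 1/2 := by field_simp
  have htx2 : ∀ i, -(1/2:ℝ) ≤ t * x i := fun i => neg_le_of_abs_le (htx i)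
  -- the perturbed measure
  set ν' : Fin J → ℝ := fun j' => (1-t) * νh j' + t * (if j' = j then 1 else 0) with hν'_def
  have hν'0 : ∀ j', 0 ≤ ν' j' := by
    intro j'
    have : (0:ℝ) ≤ if j' = j then 1 else 0 := by positivity
    have := mul_nonneg ht0.le this
    have := mul_nonneg (by linarith : (0:ℝ) ≤ 1 - t) (h0 j')
    simp only [hν'_def]
    linarith
  have hν'1 : ∑ j', ν' j' = 1 := by
    simp only [hν'_def]
    rw [Finset.sum_add_distrib, ← Finset.mul_sum, ← Finset.mul_sum, h1,
      Finset.sum_ite_eq' Finset.univ j (fun _ => (1:ℝ))]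
    simp
  have hrt : ∀ i, ∑ j', κ i j' * ν' j' = r i * (1 + t * x i) := by
    intro i
    have expand : ∀ j', κ i j' * ν' j'
        = (1-t) * (κ i j' * νh j') + t * (κ i j' * (if j' = j then 1 else 0)) := by
      intro j'; simp only [hν'_def]; ring
    rw [Finset.sum_congr rfl (fun j' _ => expand j'), Finset.sum_add_distrib,
      ← Finset.mul_sum, ← Finset.mul_sum]
    have : ∑ j', κ i j' * (if j' = j then 1 else 0) = κ i j := by
      rw [Finset.sum_congr rfl (fun j' _ => (mul_ite _ _ _ _ : κ i j' * _ = _))]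
      simp
    rw [this]
    have hrne : r i ≠ 0 := ne_of_gt (hr i)
    simp only [hx_def]
    field_simp
    ring
  clear_value x B δ t ν' r
  have honepos : ∀ i, 0 < 1 + t * x i := by
    intro i
    have h := htx2 i
    set u := t * x i with hu
    linarith
  have hlogsum : ∑ i, μ i * Real.log (1 + t * x i) ≤ 0 := by
    have hm := hmax ν' hν'0 hν'1
    have he : ∀ i, Real.log (∑ j', κ i j' * ν' j')
        = Real.log (r i) + Real.log (1 + t * x i) := by
      intro i
      rw [hrt i, Real.log_mul (ne_of_gt (hr i)) (ne_of_gt (honepos i))]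
    rw [Finset.sum_congr rfl (fun i _ => by rw [he i])] at hm
    have hsplit : ∑ i, μ i * (Real.log (r i) + Real.log (1 + t * x i))
        = (∑ i, μ i * Real.log (r i)) + ∑ i, μ i * Real.log (1 + t * x i) := by
      rw [← Finset.sum_add_distrib]
      exact Finset.sum_congr rfl (fun i _ => by ring)
    rw [hsplit] at hm
    simp only [hr_def] at hm
    linarith
  -- lower bound on the log sum
  have hlb : ∀ i, μ i * (t * x i - 2*(t * x i)^2) ≤ μ i * Real.log (1 + t * x i) := by
    intro i
    exact mul_le_mul_of_nonneg_left (log_one_add_ge (htx2 i)) (hμpos i).le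
  have hsum1 : ∑ i, μ i * (t * x i) = t * δ := by
    have : ∀ i, μ i * (t * x i) = t * (μ i * (κ i j / r i)) - t * μ i := by
      intro i; simp only [hx_def]; ring
    rw [Finset.sum_congr rfl (fun i _ => this i), Finset.sum_sub_distrib,
      ← Finset.mul_sum, ← Finset.mul_sum, hμ1, hδ_def]
    ring
  have hsum2 : ∑ i, μ i * (2*(t * x i)^2) ≤ 2 * t^2 * B^2 := by
    have : ∀ i, μ i * (2*(t * x i)^2) ≤ μ i * (2 * t^2 * B^2) := by
      intro i
      apply mul_le_mul_of_nonneg_left ?_ (hμpos i).le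
      have habs : |t * x i| ≤ t * B := by
        rw [abs_mul, abs_of_pos ht0]
        exact mul_le_mul_of_nonneg_left (hxB i) ht0.le
      have h1 : (t * x i)^2 ≤ (t*B)^2 := by
        have h2 := abs_le.mp habs
        nlinarith [h2.1, h2.2]
      nlinarith [h1]
    calc ∑ i, μ i * (2*(t * x i)^2) ≤ ∑ i, μ i * (2 * t^2 * B^2) :=
          Finset.sum_le_sum (fun i _ => this i)
    _ = 2 * t^2 * B^2 := by rw [← Finset.sum_mul, hμ1, one_mul]
  have hfinal : t * δ - 2 * t^2 * B^2 ≤ 0 := by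
    have e : ∀ i, μ i * (t * x i - 2*(t * x i)^2)
        = μ i * (t * x i) - μ i * (2*(t * x i)^2) := fun i => by ring
    have := Finset.sum_le_sum (fun i (_ : i ∈ Finset.univ) => hlb i)
    rw [Finset.sum_congr rfl (fun i _ => e i), Finset.sum_sub_distrib, hsum1] at this
    linarith
  -- contradiction
  have h2tB : 2 * t * B^2 ≤ δ/2 := by
    have := mul_le_mul_of_nonneg_right htδ (by positivity : (0:ℝ) ≤ 2*B^2)
    calc 2 * t * B^2 = t * (2*B^2) := by ring
    _ ≤ (δ/(4*B^2)) * (2*B^2) := this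
    _ = δ/2 := by field_simp; ring
  have h3 := mul_le_mul_of_nonneg_left h2tB ht0.le
  have e1 : t * (2 * t * B^2) = 2 * t^2 * B^2 := by ring
  have e2 : t * (δ/2) = t * δ / 2 := by ring
  have hpos : 0 < t * δ := mul_pos ht0 hδ0
  linarith

lemma kkt_col {I J : ℕ} (μ : Fin I → ℝ) (hμpos : ∀ i, 0 < μ i) (hμ1 : ∑ i, μ i = 1)
    (κ : Fin I → Fin J → ℝ) (hκ : ∀ i j, 0 < κ i j)
    (νh : Fin J → ℝ) (h0 : ∀ j, 0 ≤ νh j) (h1 : ∑ j, νh j = 1)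
    (hmax : ∀ ν : Fin J → ℝ, (∀ j, 0 ≤ ν j) → ∑ j, ν j = 1 →
      (∑ i, μ i * Real.log (∑ j, κ i j * ν j)) ≤ ∑ i, μ i * Real.log (∑ j, κ i j * νh j)) :
    ∀ j, ∑ i, μ i * κ i j * νh j / (∑ j', κ i j' * νh j') = νh j := by
  set r : Fin I → ℝ := fun i => ∑ j', κ i j' * νh j' with hr_def
  have hr : ∀ i, 0 < r i := fun i => r_pos κ hκ νh h0 h1 i
  have hg : ∀ j, ∑ i, μ i * (κ i j / r i) ≤ 1 := by
    intro j
    exact kkt_g_le_one μ hμpos hμ1 κ hκ νh h0 h1 hmax j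
  have hgsum : ∑ j, νh j * (∑ i, μ i * (κ i j / r i)) = 1 := by
    have e1 : ∀ j, νh j * (∑ i, μ i * (κ i j / r i))
        = ∑ i, (μ i / r i) * (κ i j * νh j) := by
      intro j; rw [Finset.mul_sum]; exact Finset.sum_congr rfl fun i _ => by ring
    rw [Finset.sum_congr rfl (fun j _ => e1 j), Finset.sum_comm]
    have e2 : ∀ i, ∑ j, (μ i / r i) * (κ i j * νh j) = μ i := by
      intro i
      rw [← Finset.mul_sum]
      have hri : ∑ j, κ i j * νh j = r i := by rw [hr_def]
      rw [hri, div_mul_eq_mul_div, mul_div_assoc, div_self (ne_of_gt (hr i)), mul_one]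
    rw [Finset.sum_congr rfl (fun i _ => e2 i), hμ1]
  have hterm : ∀ j, 0 ≤ νh j * (1 - ∑ i, μ i * (κ i j / r i)) :=
    fun j => mul_nonneg (h0 j) (by linarith [hg j])
  have hzero : ∑ j, νh j * (1 - ∑ i, μ i * (κ i j / r i)) = 0 := by
    have e : ∀ j, νh j * (1 - ∑ i, μ i * (κ i j / r i))
        = νh j - νh j * (∑ i, μ i * (κ i j / r i)) := fun j => by ring
    rw [Finset.sum_congr rfl (fun j _ => e j), Finset.sum_sub_distrib, h1, hgsum]
    ring
  have heach := (Finset.sum_eq_zero_iff_of_nonneg (fun j _ => hterm j)).mp hzero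
  intro j
  have hj := heach j (Finset.mem_univ j)
  have e3 : ∑ i, μ i * κ i j * νh j / r i = νh j * (∑ i, μ i * (κ i j / r i)) := by
    rw [Finset.mul_sum]; exact Finset.sum_congr rfl fun i _ => by ring
  rw [e3]
  nlinarith [hj]

lemma exists_maximizer {I J : ℕ} (hJ : 1 ≤ J) (μ : Fin I → ℝ)
    (κ : Fin I → Fin J → ℝ) (hκ : ∀ i j, 0 < κ i j) :
    ∃ νs : Fin J → ℝ, (∀ j, 0 ≤ νs j) ∧ (∑ j, νs j = 1) ∧
      ∀ ν : Fin J → ℝ, (∀ j, 0 ≤ ν j) → ∑ j, ν j = 1 →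
        (∑ i, μ i * Real.log (∑ j, κ i j * ν j)) ≤ ∑ i, μ i * Real.log (∑ j, κ i j * νs j) := by
  set S : Set (Fin J → ℝ) := {ν | (∀ j, 0 ≤ ν j) ∧ ∑ j, ν j = 1} with hS_def
  have hSne : S.Nonempty := by
    refine ⟨fun _ => (J:ℝ)⁻¹, fun j => by positivity, ?_⟩
    rw [Finset.sum_const, Finset.card_univ, Fintype.card_fin, nsmul_eq_mul]
    have : (J:ℝ) ≠ 0 := Nat.cast_ne_zero.mpr (by omega)
    field_simp
  have hclosed : IsClosed S := by
    have h1 : IsClosed {ν : Fin J → ℝ | ∀ j, 0 ≤ ν j} := by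
      have : {ν : Fin J → ℝ | ∀ j, 0 ≤ ν j} = ⋂ j, {ν : Fin J → ℝ | 0 ≤ ν j} := by
        ext ν; simp
      rw [this]
      exact isClosed_iInter fun j => isClosed_le continuous_const (continuous_apply j)
    have h2 : IsClosed {ν : Fin J → ℝ | ∑ j, ν j = 1} :=
      isClosed_eq (continuous_finset_sum _ fun j _ => continuous_apply j) continuous_const
    exact h1.inter h2
  have hcompact : IsCompact S := by
    apply IsCompact.of_isClosed_subset (isCompact_Icc (a := (0 : Fin J → ℝ)) (b := 1)) hclosed
    rintro ν ⟨hν0, hν1⟩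
    constructor
    · intro j; exact hν0 j
    · intro j
      have := Finset.single_le_sum (f := ν) (fun j' _ => hν0 j') (Finset.mem_univ j)
      show ν j ≤ 1
      linarith
  have hcont : ContinuousOn (fun ν : Fin J → ℝ => ∑ i, μ i * Real.log (∑ j, κ i j * ν j)) S := by
    apply continuousOn_finset_sum
    intro i _
    apply ContinuousOn.mul continuousOn_const
    apply ContinuousOn.log
    · exact (continuous_finset_sum _ fun j _ => (continuous_const.mul (continuous_apply j))).continuousOn
    · rintro ν ⟨hν0, hν1⟩
      exact ne_of_gt (r_pos κ hκ ν hν0 hν1 i)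
  obtain ⟨νs, hmem, hmax⟩ := hcompact.exists_isMaxOn hSne hcont
  obtain ⟨hνs0, hνs1⟩ := hmem
  exact ⟨νs, hνs0, hνs1, fun ν h0 h1 => hmax (Set.mem_setOf.mpr ⟨h0, h1⟩)⟩

/-- **MLE interpretation.** A probability vector maximizes the log-likelihood
for the kernel inversion problem with kernel `κ_{ij} = exp(−C_{ij}/ε)/Z` iff it minimizes
`ν ↦ OT_ε(μ, ν)` over the probability simplex. -/
theorem mle_iff_min_entropic_ot (I J : ℕ) (hI : 1 ≤ I) (hJ : 1 ≤ J)
    (μ : Fin I → ℝ) (hμpos : ∀ i, 0 < μ i) (hμsum : ∑ i, μ i = 1)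
    (C : Fin I → Fin J → ℝ) (ε : ℝ) (hε : 0 < ε)
    (hZ : ∀ j j' : Fin J, ∑ i, Real.exp (-C i j / ε) = ∑ i, Real.exp (-C i j' / ε)) :
    let κ : Fin I → Fin J → ℝ :=
      fun i j => Real.exp (-C i j / ε) / ∑ i', Real.exp (-C i' j / ε)
    let L : (Fin J → ℝ) → ℝ := fun ν => ∑ i, μ i * Real.log (∑ j, κ i j * ν j)
    ∀ νhat : Fin J → ℝ, (∀ j, 0 ≤ νhat j) → ∑ j, νhat j = 1 →
      ((∀ ν : Fin J → ℝ, (∀ j, 0 ≤ ν j) → ∑ j, ν j = 1 → L ν ≤ L νhat) ↔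
        (∀ ν : Fin J → ℝ, (∀ j, 0 ≤ ν j) → ∑ j, ν j = 1 →
          OTeps C ε μ νhat ≤ OTeps C ε μ ν)) := by
  intro κ L νhat hh0 hh1
  have hInonempty : Nonempty (Fin I) := ⟨⟨0, hI⟩⟩
  have hZpos : ∀ j, 0 < ∑ i, Real.exp (-C i j / ε) :=
    fun j => Finset.sum_pos (fun i _ => Real.exp_pos _) Finset.univ_nonempty
  have hκpos : ∀ i j, 0 < κ i j := fun i j => div_pos (Real.exp_pos _) (hZpos j)
  set lZ : ℝ := Real.log (∑ i, Real.exp (-C i ⟨0, hJ⟩ / ε)) with hlZ_def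
  have hC : ∀ i j, C i j = -ε * (Real.log (κ i j) + lZ) := by
    intro i j
    have hlog : Real.log (κ i j) = -C i j / ε - lZ := by
      show Real.log (Real.exp (-C i j / ε) / ∑ i', Real.exp (-C i' j / ε)) = _
      rw [Real.log_div (Real.exp_ne_zero _) (ne_of_gt (hZpos j)), Real.log_exp,
        hZ j ⟨0, hJ⟩]
    rw [hlog]
    field_simp
    ring
  have hLdef : ∀ ν, L ν = ∑ i, μ i * Real.log (∑ j, κ i j * ν j) := fun ν => rfl
  have hA : ∀ ν : Fin J → ℝ, (∀ j, 0 ≤ ν j) → ∑ j, ν j = 1 →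
      -ε * L ν - ε * lZ ≤ OTeps C ε μ ν := by
    intro ν h0 h1
    rw [hLdef]
    apply le_csInf
    · refine ⟨_, ⟨fun i j => μ i * ν j, fun i j => mul_nonneg (hμpos i).le (h0 j),
        fun i => by rw [← Finset.mul_sum, h1, mul_one],
        fun j => by rw [← Finset.sum_mul, hμsum, one_mul], rfl⟩⟩
    · rintro v ⟨plan, hp0, hrow, hcol, rfl⟩
      exact lower_bound μ hμpos hμsum κ hκpos C ε lZ hε hC ν h0 h1 plan hp0 hrow hcol
  have hB : ∀ νs : Fin J → ℝ, (∀ j, 0 ≤ νs j) → ∑ j, νs j = 1 →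
      (∀ ν : Fin J → ℝ, (∀ j, 0 ≤ ν j) → ∑ j, ν j = 1 → L ν ≤ L νs) →
      OTeps C ε μ νs = -ε * L νs - ε * lZ := by
    intro νs h0 h1 hmax
    have hmax' : ∀ ν : Fin J → ℝ, (∀ j, 0 ≤ ν j) → ∑ j, ν j = 1 →
        (∑ i, μ i * Real.log (∑ j, κ i j * ν j))
          ≤ ∑ i, μ i * Real.log (∑ j, κ i j * νs j) := by
      intro ν a b
      have h := hmax ν a b
      rw [hLdef, hLdef] at h
      exact h
    have hr : ∀ i, 0 < ∑ j, κ i j * νs j := fun i => r_pos κ hκpos νs h0 h1 i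
    have hcolq := kkt_col μ hμpos hμsum κ hκpos νs h0 h1 hmax'
    apply le_antisymm
    · apply csInf_le
      · refine ⟨-ε * L νs - ε * lZ, ?_⟩
        rintro v ⟨plan, hp0, hrow, hcol, rfl⟩
        rw [hLdef]
        exact lower_bound μ hμpos hμsum κ hκpos C ε lZ hε hC νs h0 h1 plan hp0 hrow hcol
      · refine ⟨fun i j => μ i * κ i j * νs j / (∑ j', κ i j' * νs j'),
          fun i j => div_nonneg
            (mul_nonneg (mul_nonneg (hμpos i).le (hκpos i j).le) (h0 j)) (hr i).le,
          fun i => q_row_sum μ κ νs i (hr i), hcolq, ?_⟩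
        rw [hLdef]
        exact (value_at_q μ hμpos hμsum κ hκpos C ε lZ hε hC νs h0 hr).symm
    · exact hA νs h0 h1
  constructor
  · intro hmax ν h0 h1
    rw [hB νhat hh0 hh1 hmax]
    have h2 := hA ν h0 h1
    have h3 := mul_le_mul_of_nonneg_left (hmax ν h0 h1) hε.le
    linarith
  · intro hmin ν h0 h1
    obtain ⟨νs, hs0, hs1, hsmax⟩ := exists_maximizer hJ μ κ hκpos
    have hsmaxL : ∀ ν' : Fin J → ℝ, (∀ j, 0 ≤ ν' j) → ∑ j, ν' j = 1 → L ν' ≤ L νs := by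
      intro ν' a b
      rw [hLdef, hLdef]
      exact hsmax ν' a b
    have heq := hB νs hs0 hs1 hsmaxL
    have h2 := hA νhat hh0 hh1
    have h3 := hmin νs hs0 hs1
    rw [heq] at h3
    have h5 : ε * L νs ≤ ε * L νhat := by linarith
    have h6 : L νs ≤ L νhat := le_of_mul_le_mul_left h5 hε
    exact le_trans (hsmaxL ν h0 h1) h6
end

section
/- Let I, J ≥ 1 be integers, let μ ∈ ℝ^I and β ∈ ℝ^J be probability vectors with all entries strictly positive, let C ∈ ℝ^{I×J}, and let ε > 0, η > ε. Define F(a,b) = Σ_i μ_i a_i − ε Σ_{i,j} μ_i β_j exp((a_i + b_j − C_{ij})/ε) − (η−ε) log(Σ_j β_j exp(−b_j/(η−ε))) for (a,b) ∈ ℝ^I × ℝ^J. Then F attains its supremum: there exists (a*,b*) ∈ ℝ^I × ℝ^J with F(a*,b*) ≥ F(a,b) for all (a,b). -/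
open Real BigOperators Finset

/-- The dual objective of the regularized Wasserstein estimator problem. -/
noncomputable def Fobj {I J : ℕ} (μ : Fin I → ℝ) (β : Fin J → ℝ)
    (C : Fin I → Fin J → ℝ) (ε η : ℝ) (a : Fin I → ℝ) (b : Fin J → ℝ) : ℝ :=
  ∑ i, μ i * a i - ε * ∑ i, ∑ j, μ i * β j * Real.exp ((a i + b j - C i j) / ε)
    - (η - ε) * Real.log (∑ j, β j * Real.exp (-b j / (η - ε)))

/-- Tangent line inequality for `exp` at the point `log l`. -/
lemma key_exp (x l : ℝ) (hl : 0 < l) : l * (x + 1 - Real.log l) ≤ Real.exp x := by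
  have h := Real.add_one_le_exp (x - Real.log l)
  have h2 : Real.exp (Real.log l) * (x - Real.log l + 1) ≤
      Real.exp (Real.log l) * Real.exp (x - Real.log l) :=
    mul_le_mul_of_nonneg_left h (Real.exp_pos _).le
  rw [← Real.exp_add, Real.exp_log hl] at h2
  calc l * (x + 1 - Real.log l) = l * (x - Real.log l + 1) := by ring
  _ ≤ Real.exp (Real.log l + (x - Real.log l)) := h2
  _ = Real.exp x := by ring_nf

/-- `Fобj` is invariant under the shift `(a, b) ↦ (a + c, b - c)`. -/
lemma Fobj_shift {I J : ℕ} (hJ : 1 ≤ J) (μ : Fin I → ℝ) (hμsum : ∑ i, μ i = 1)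
    (β : Fin J → ℝ) (hβpos : ∀ j, 0 < β j) (C : Fin I → Fin J → ℝ) (ε η : ℝ)
    (hδ : 0 < η - ε) (c : ℝ) (a : Fin I → ℝ) (b : Fin J → ℝ) :
    Fobj μ β C ε η (fun i => a i + c) (fun j => b j - c) = Fobj μ β C ε η a b := by
  haveI : Nonempty (Fin J) := ⟨⟨0, hJ⟩⟩
  unfold Fobj
  have h1 : ∑ i, μ i * (a i + c) = (∑ i, μ i * a i) + c := by
    simp [mul_add, Finset.sum_add_distrib, ← Finset.sum_mul, hμsum]
  have h3 : ∑ j, β j * Real.exp (-(b j - c) / (η - ε))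
      = Real.exp (c / (η - ε)) * ∑ j, β j * Real.exp (-b j / (η - ε)) := by
    rw [Finset.mul_sum]
    refine Finset.sum_congr rfl fun j _ => ?_
    have : -(b j - c) / (η - ε) = c / (η - ε) + -b j / (η - ε) := by ring
    rw [this, Real.exp_add]; ring
  have hSpos : 0 < ∑ j, β j * Real.exp (-b j / (η - ε)) :=
    Finset.sum_pos (fun j _ => mul_pos (hβpos j) (Real.exp_pos _)) Finset.univ_nonempty
  rw [h1, h3, Real.log_mul (Real.exp_pos _).ne' hSpos.ne', Real.log_exp]
  have h4 : (∑ i, ∑ j, μ i * β j * Real.exp ((a i + c + (b j - c) - C i j) / ε))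
      = ∑ i, ∑ j, μ i * β j * Real.exp ((a i + b j - C i j) / ε) := by
    refine Finset.sum_congr rfl fun i _ => Finset.sum_congr rfl fun j _ => ?_
    have : (a i + c + (b j - c) - C i j) / ε = (a i + b j - C i j) / ε := by ring_nf
    rw [this]
  rw [h4]
  field_simp
  ring

/-- The dual objective `F` attains its supremum on `ℝ^I × ℝ^J`. -/
theorem dual_objective_attains_max (I J : ℕ) (hI : 1 ≤ I) (hJ : 1 ≤ J)
    (μ : Fin I → ℝ) (hμpos : ∀ i, 0 < μ i) (hμsum : ∑ i, μ i = 1)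
    (β : Fin J → ℝ) (hβpos : ∀ j, 0 < β j) (hβsum : ∑ j, β j = 1)
    (C : Fin I → Fin J → ℝ) (ε η : ℝ) (hε : 0 < ε) (hεη : ε < η) :
    ∃ astar : Fin I → ℝ, ∃ bstar : Fin J → ℝ,
      ∀ (a : Fin I → ℝ) (b : Fin J → ℝ), Fobj μ β C ε η a b ≤ Fobj μ β C ε η astar bstar := by
  haveI hIne : Nonempty (Fin I) := ⟨⟨0, hI⟩⟩
  haveI hJne : Nonempty (Fin J) := ⟨⟨0, hJ⟩⟩
  have hδ : 0 < η - ε := by linarith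
  -- constants
  set μm := univ.inf' univ_nonempty μ with hμmdef
  set βm := univ.inf' univ_nonempty β with hβmdef
  have hμmpos : 0 < μm := (Finset.lt_inf'_iff _).mpr fun i _ => hμpos i
  have hβmpos : 0 < βm := (Finset.lt_inf'_iff _).mpr fun j _ => hβpos j
  have hμmle : ∀ i, μm ≤ μ i := fun i => Finset.inf'_le _ (mem_univ i)
  have hβmle : ∀ j, βm ≤ β j := fun j => Finset.inf'_le _ (mem_univ j)
  have hβm1 : βm ≤ 1 := by
    obtain ⟨j0⟩ := hJne
    calc βm ≤ β j0 := hβmle j0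
    _ ≤ ∑ j, β j := Finset.single_le_sum (fun j _ => (hβpos j).le) (mem_univ j0)
    _ = 1 := hβsum
  set Cm := univ.sup' univ_nonempty (fun p : Fin I × Fin J => C p.1 p.2) with hCmdef
  have hCmle : ∀ i j, C i j ≤ Cm :=
    fun i j => Finset.le_sup' (f := fun p : Fin I × Fin J => C p.1 p.2) (mem_univ (i, j))
  clear_value Cm
  clear_value μm βm
  set K1 := -((η - ε) * Real.log βm) with hK1def
  have hK1nonneg : 0 ≤ K1 := by
    have hlog : Real.log βm ≤ 0 := Real.log_nonpos hβmpos.le hβm1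
    nlinarith
  set c0 := 2 * ε * (1 - Real.log (2 / (μm * βm))) with hc0def
  set F0 := Fobj μ β C ε η 0 0 with hF0def
  clear_value K1 c0 F0
  -- the core exponential estimate
  have hS2pos : ∀ (a : Fin I → ℝ) (b : Fin J → ℝ),
      0 ≤ ε * ∑ i, ∑ j, μ i * β j * Real.exp ((a i + b j - C i j) / ε) := by
    intro a b
    have h : 0 ≤ ∑ i, ∑ j, μ i * β j * Real.exp ((a i + b j - C i j) / ε) :=
      Finset.sum_nonneg fun i _ => Finset.sum_nonneg fun j _ =>
        mul_nonneg (mul_nonneg (hμpos i).le (hβpos j).le) (Real.exp_pos _).le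
    exact mul_nonneg hε.le h
  have core : ∀ (a : Fin I → ℝ) (b : Fin J → ℝ) (i : Fin I) (j : Fin J),
      2 * (a i + b j - Cm) + c0
        ≤ ε * ∑ i', ∑ j', μ i' * β j' * Real.exp ((a i' + b j' - C i' j') / ε) := by
    intro a b i j
    have hsingle : μ i * β j * Real.exp ((a i + b j - C i j) / ε)
        ≤ ∑ i', ∑ j', μ i' * β j' * Real.exp ((a i' + b j' - C i' j') / ε) := by
      have h1 : μ i * β j * Real.exp ((a i + b j - C i j) / ε)
          ≤ ∑ j', μ i * β j' * Real.exp ((a i + b j' - C i j') / ε) :=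
        Finset.single_le_sum (f := fun j' => μ i * β j' * Real.exp ((a i + b j' - C i j') / ε))
          (fun j' _ => mul_nonneg (mul_nonneg (hμpos i).le (hβpos j').le) (Real.exp_pos _).le)
          (mem_univ j)
      have h2 : ∑ j', μ i * β j' * Real.exp ((a i + b j' - C i j') / ε)
          ≤ ∑ i', ∑ j', μ i' * β j' * Real.exp ((a i' + b j' - C i' j') / ε) :=
        Finset.single_le_sum
          (f := fun i' => ∑ j', μ i' * β j' * Real.exp ((a i' + b j' - C i' j') / ε))
          (fun i' _ => Finset.sum_nonneg fun j' _ =>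
            mul_nonneg (mul_nonneg (hμpos i').le (hβpos j').le) (Real.exp_pos _).le)
          (mem_univ i)
      exact h1.trans h2
    have hmb : 0 < μm * βm := mul_pos hμmpos hβmpos
    have hl : 0 < 2 / (μm * βm) := by positivity
    have hmono : μm * βm * Real.exp ((a i + b j - Cm) / ε)
        ≤ μ i * β j * Real.exp ((a i + b j - C i j) / ε) := by
      have he : Real.exp ((a i + b j - Cm) / ε) ≤ Real.exp ((a i + b j - C i j) / ε) := by
        apply Real.exp_le_exp.mpr
        gcongr
        exact hCmle i j
      exact mul_le_mul (mul_le_mul (hμmle i) (hβmle j) hβmpos.le (hμpos i).le) he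
        (Real.exp_pos _).le (mul_pos (hμpos i) (hβpos j)).le
    have heq : (ε * (μm * βm)) * ((2 / (μm * βm)) *
          ((a i + b j - Cm) / ε + 1 - Real.log (2 / (μm * βm)))) = 2 * (a i + b j - Cm) + c0 := by
      rw [hc0def]
      generalize Real.log (2 / (μm * βm)) = L
      field_simp
      ring
    calc 2 * (a i + b j - Cm) + c0
        = (ε * (μm * βm)) * ((2 / (μm * βm)) *
            ((a i + b j - Cm) / ε + 1 - Real.log (2 / (μm * βm)))) := heq.symm
      _ ≤ (ε * (μm * βm)) * Real.exp ((a i + b j - Cm) / ε) :=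
          mul_le_mul_of_nonneg_left (key_exp _ _ hl) (by positivity)
      _ = ε * (μm * βm * Real.exp ((a i + b j - Cm) / ε)) := by ring
      _ ≤ ε * (μ i * β j * Real.exp ((a i + b j - C i j) / ε)) :=
          mul_le_mul_of_nonneg_left hmono hε.le
      _ ≤ ε * ∑ i', ∑ j', μ i' * β j' * Real.exp ((a i' + b j' - C i' j') / ε) :=
          mul_le_mul_of_nonneg_left hsingle hε.le
  -- bound on the log term when `b` has a zero entry
  have hS3 : ∀ b : Fin J → ℝ, (∃ j0, b j0 = 0) →
      -((η - ε) * Real.log (∑ j, β j * Real.exp (-b j / (η - ε)))) ≤ K1 := by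
    rintro b ⟨j0, hj0⟩
    have hsum : βm ≤ ∑ j, β j * Real.exp (-b j / (η - ε)) := by
      calc βm ≤ β j0 := hβmle j0
      _ = β j0 * Real.exp (-b j0 / (η - ε)) := by rw [hj0]; simp
      _ ≤ ∑ j, β j * Real.exp (-b j / (η - ε)) :=
          Finset.single_le_sum (f := fun j => β j * Real.exp (-b j / (η - ε)))
            (fun j _ => mul_nonneg (hβpos j).le (Real.exp_pos _).le) (mem_univ j0)
    have hlog : Real.log βm ≤ Real.log (∑ j, β j * Real.exp (-b j / (η - ε))) :=
      Real.log_le_log hβmpos hsum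
    have h2 := mul_le_mul_of_nonneg_left hlog hδ.le
    rw [hK1def]; linarith
  -- the weighted first term is bounded by the max of `a`
  have hS1 : ∀ a : Fin I → ℝ, ∑ i, μ i * a i ≤ univ.sup' univ_nonempty a := by
    intro a
    calc ∑ i, μ i * a i ≤ ∑ i, μ i * univ.sup' univ_nonempty a :=
        Finset.sum_le_sum fun i _ =>
          mul_le_mul_of_nonneg_left (Finset.le_sup' a (mem_univ i)) (hμpos i).le
    _ = univ.sup' univ_nonempty a := by rw [← Finset.sum_mul, hμsum, one_mul]
  -- the explicit radius
  set Aup := 2 * Cm - c0 + K1 - F0 with hAupdef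
  set N := F0 - max Aup 0 - K1 with hNdef
  set aLow := -(|N| / μm) with haLowdef
  set Bup := (Aup - 2 * aLow + 2 * Cm - c0 + K1 - F0) / 2 with hBupdef
  set R := max (max |aLow| |Aup|) |Bup| with hRdef
  clear_value Aup N aLow Bup R
  have hR0 : 0 ≤ R := by
    rw [hRdef]
    exact le_trans (abs_nonneg aLow) ((le_max_left _ _).trans (le_max_left _ _))
  have habsaLow : |aLow| ≤ R := hRdef ▸ (le_max_left _ _).trans (le_max_left _ _)
  have habsAup : |Aup| ≤ R := hRdef ▸ (le_max_right _ _).trans (le_max_left _ _)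
  have habsBup : |Bup| ≤ R := hRdef ▸ le_max_right _ _
  -- coercivity: normalized near-optimal points lie in the ball of radius R
  have hbounds : ∀ (a : Fin I → ℝ) (b : Fin J → ℝ), (∀ j, 0 ≤ b j) → (∃ j0, b j0 = 0) →
      F0 ≤ Fobj μ β C ε η a b → (∀ i, |a i| ≤ R) ∧ (∀ j, |b j| ≤ R) := by
    rintro a b hbnn ⟨j0, hj0⟩ hF
    rw [Fobj] at hF
    have haleA : ∀ i, a i ≤ univ.sup' univ_nonempty a :=
      fun i => Finset.le_sup' a (mem_univ i)
    obtain ⟨istar, -, histar⟩ := Finset.exists_mem_eq_sup' univ_nonempty a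
    have hS1a := hS1 a
    have hS3a := hS3 b ⟨j0, hj0⟩
    -- Step 1: upper bound for the max of a
    have hAup : univ.sup' univ_nonempty a ≤ Aup := by
      have hcore := core a b istar j0
      rw [hj0, ← histar] at hcore
      rw [hAupdef]; linarith
    have haiup : ∀ i, a i ≤ Aup := fun i => (haleA i).trans hAup
    -- Step 2: lower bound for each a i
    have halow : ∀ i, aLow ≤ a i := by
      intro i
      have hS2nn := hS2pos a b
      have hsplit : ∑ k, μ k * a k ≤ μ i * a i + max Aup 0 := by
        have h5 : ∑ k, μ k * a k = μ i * a i + ∑ k ∈ univ.erase i, μ k * a k :=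
          (Finset.add_sum_erase _ _ (mem_univ i)).symm
        have h1 : ∑ k ∈ univ.erase i, μ k * a k ≤ ∑ k ∈ univ.erase i, μ k * max Aup 0 :=
          Finset.sum_le_sum fun k _ =>
            mul_le_mul_of_nonneg_left ((haiup k).trans (le_max_left _ _)) (hμpos k).le
        have h2 : ∑ k ∈ univ.erase i, μ k * max Aup 0
            = (∑ k ∈ univ.erase i, μ k) * max Aup 0 := (Finset.sum_mul _ _ _).symm
        have h3 : ∑ k ∈ univ.erase i, μ k ≤ 1 := by
          have h := Finset.sum_le_sum_of_subset_of_nonneg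
            (Finset.subset_univ (univ.erase i)) (fun k _ _ => (hμpos k).le)
          rw [hμsum] at h; exact h
        have h4 : (∑ k ∈ univ.erase i, μ k) * max Aup 0 ≤ 1 * max Aup 0 :=
          mul_le_mul_of_nonneg_right h3 (le_max_right _ _)
        linarith
      have hlb : N ≤ μ i * a i := by rw [hNdef]; linarith
      have h6 : N / μ i ≤ a i := by
        rw [div_le_iff₀ (hμpos i)]
        nlinarith [hlb, hμpos i]
      have h9 : |N| / μ i ≤ |N| / μm :=
        div_le_div_of_nonneg_left (abs_nonneg N) hμmpos (hμmle i)
      have h7 : aLow ≤ N / μ i := by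
        have hN1 : -|N| ≤ N := neg_abs_le N
        have h8 : -|N| / μ i ≤ N / μ i := (div_le_div_iff_of_pos_right (hμpos i)).mpr hN1
        calc aLow = -(|N| / μm) := haLowdef
        _ ≤ -(|N| / μ i) := neg_le_neg h9
        _ = -|N| / μ i := (neg_div _ _).symm
        _ ≤ N / μ i := h8
      exact h7.trans h6
    -- Step 3: upper bound for each b j
    have hbup : ∀ j, b j ≤ Bup := by
      intro j
      obtain ⟨i0⟩ := hIne
      have hcore := core a b i0 j
      have hai0 := halow i0
      rw [hBupdef]; linarith
    constructor
    · intro i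
      have h1 := halow i
      have h2 := haiup i
      have h3 := habsaLow
      have h4 := habsAup
      rw [abs_le]
      constructor
      · linarith only [h1, h3, neg_abs_le aLow]
      · linarith only [h2, h4, le_abs_self Aup]
    · intro j
      have h1 := hbnn j
      have h2 := hbup j
      have h3 := habsBup
      rw [abs_le]
      constructor
      · linarith only [h1, hR0]
      · linarith only [h2, h3, le_abs_self Bup]
  -- continuity of the objective
  have hcont : Continuous (fun p : (Fin I → ℝ) × (Fin J → ℝ) => Fobj μ β C ε η p.1 p.2) := by
    have hg : Continuous (fun p : (Fin I → ℝ) × (Fin J → ℝ) =>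
        ∑ j, β j * Real.exp (-p.2 j / (η - ε))) := by
      apply continuous_finset_sum
      intro j _
      exact continuous_const.mul (Real.continuous_exp.comp
        ((((continuous_apply j).comp continuous_snd).neg).div_const _))
    have hgpos : ∀ p : (Fin I → ℝ) × (Fin J → ℝ),
        (∑ j, β j * Real.exp (-p.2 j / (η - ε))) ≠ 0 := fun p =>
      (Finset.sum_pos (fun j _ => mul_pos (hβpos j) (Real.exp_pos _))
        Finset.univ_nonempty).ne'
    unfold Fobj
    apply Continuous.sub
    apply Continuous.sub
    · exact continuous_finset_sum _ fun i _ =>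
        continuous_const.mul ((continuous_apply i).comp continuous_fst)
    · apply continuous_const.mul
      apply continuous_finset_sum
      intro i _
      apply continuous_finset_sum
      intro j _
      refine continuous_const.mul (Real.continuous_exp.comp ?_)
      exact ((((continuous_apply i).comp continuous_fst).add
        ((continuous_apply j).comp continuous_snd)).sub continuous_const).div_const _
    · exact continuous_const.mul (hg.log hgpos)
  -- maximize over the compact box
  have hKcompact : IsCompact ((Metric.closedBall (0 : Fin I → ℝ) R) ×ˢ (Metric.closedBall (0 : Fin J → ℝ) R)) :=
    (isCompact_closedBall _ _).prod (isCompact_closedBall _ _)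
  have h00K : ((0 : Fin I → ℝ), (0 : Fin J → ℝ)) ∈ (Metric.closedBall (0 : Fin I → ℝ) R) ×ˢ (Metric.closedBall (0 : Fin J → ℝ) R) :=
    Set.mem_prod.mpr ⟨Metric.mem_closedBall_self hR0, Metric.mem_closedBall_self hR0⟩
  obtain ⟨p, hpK, hpmax⟩ := hKcompact.exists_isMaxOn ⟨_, h00K⟩ hcont.continuousOn
  refine ⟨p.1, p.2, fun a b => ?_⟩
  have hF00 : F0 ≤ Fobj μ β C ε η p.1 p.2 := by
    have h := hpmax h00K
    simp only at h
    rw [hF0def]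
    exact h
  set c := univ.inf' univ_nonempty b with hcdef
  have hinv := Fobj_shift hJ μ hμsum β hβpos C ε η hδ c a b
  by_cases hcase : Fobj μ β C ε η a b ≤ F0
  · exact hcase.trans hF00
  · push_neg at hcase
    have hF' : F0 ≤ Fobj μ β C ε η (fun i => a i + c) (fun j => b j - c) := by
      rw [hinv]; linarith
    have hb0 : ∀ j, 0 ≤ b j - c := fun j => sub_nonneg.mpr (Finset.inf'_le _ (mem_univ j))
    have hbex : ∃ j0, b j0 - c = 0 := by
      obtain ⟨j0, -, hj0⟩ := Finset.exists_mem_eq_inf' univ_nonempty b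
      exact ⟨j0, by rw [hcdef, hj0]; ring⟩
    obtain ⟨ha', hb'⟩ := hbounds _ _ hb0 hbex hF'
    have hmem : ((fun i => a i + c), (fun j => b j - c)) ∈ (Metric.closedBall (0 : Fin I → ℝ) R) ×ˢ (Metric.closedBall (0 : Fin J → ℝ) R) := by
      refine Set.mem_prod.mpr ⟨?_, ?_⟩
      · rw [Metric.mem_closedBall, dist_zero_right]
        exact (pi_norm_le_iff_of_nonneg hR0).mpr fun i => by simpa using ha' i
      · rw [Metric.mem_closedBall, dist_zero_right]
        exact (pi_norm_le_iff_of_nonneg hR0).mpr fun j => by simpa using hb' j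
    have hle : Fobj μ β C ε η (fun i => a i + c) (fun j => b j - c)
        ≤ Fobj μ β C ε η p.1 p.2 := hpmax hmem
    rw [hinv] at hle
    exact hle
end

section
/- Let I, J ≥ 1 be integers, let μ ∈ ℝ^I and β ∈ ℝ^J be probability vectors with all entries strictly positive, let C ∈ ℝ^{I×J}, and let ε > 0, η > ε. For (a,b) ∈ ℝ^I × ℝ^J set D_{ij}(a,b) = exp((a_i + b_j − C_{ij})/ε), ν(b)_j = β_j exp(−b_j/(η−ε)) / Σ_k β_k exp(−b_k/(η−ε)), and F(a,b) = Σ_i μ_i a_i − ε Σ_{i,j} μ_i β_j D_{ij}(a,b) − (η−ε) log(Σ_j β_j exp(−b_j/(η−ε))). Let (a*,b*) be any maximizer of F, set ν* = ν(b*), m = max_j |log(ν*_j/β_j)| and R_C = max_{i,j} C_{ij} − min_{i,j} C_{ij}. Then for all i, j: |a*_i + b*_j − C_{ij}| ≤ ε m + 2 R_C. -/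
open Real BigOperators Finset

/-- The primal measure recovered from the dual variable `b`: softmax of `−b/(η−ε)`
with prior `β`. -/
noncomputable def nuOf {J : ℕ} (β : Fin J → ℝ) (ε η : ℝ) (b : Fin J → ℝ) (j : Fin J) : ℝ :=
  β j * Real.exp (-b j / (η - ε)) / ∑ k, β k * Real.exp (-b k / (η - ε))

lemma statA {I J : ℕ} (μ : Fin I → ℝ) (β : Fin J → ℝ) (C : Fin I → Fin J → ℝ)
    (ε η : ℝ) (hε : 0 < ε) (hμpos : ∀ i, 0 < μ i)
    (astar : Fin I → ℝ) (bstar : Fin J → ℝ)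
    (hmax : ∀ a b, Fobj μ β C ε η a b ≤ Fobj μ β C ε η astar bstar)
    (i0 : Fin I) :
    ∑ j, β j * Real.exp ((astar i0 + bstar j - C i0 j) / ε) = 1 := by
  classical
  set e : Fin I → ℝ := fun i => if i = i0 then 1 else 0 with he
  set g : ℝ → ℝ := fun t => Fobj μ β C ε η (fun i => astar i + t * e i) bstar with hgdef
  have hlocal : IsLocalMax g 0 := by
    apply Filter.Eventually.of_forall
    intro t
    have h0' : (fun i => astar i + (0:ℝ) * e i) = astar := by funext i; ring
    calc g t ≤ Fobj μ β C ε η astar bstar := hmax _ _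
    _ = g 0 := by rw [hgdef]; simp only [h0']
  -- derivative
  have hder : HasDerivAt g
      ((∑ i, μ i * e i) - ε * ∑ i, ∑ j,
        μ i * β j * (Real.exp ((astar i + bstar j - C i j) / ε) * (e i / ε))) 0 := by
    have h1 : HasDerivAt (fun t : ℝ => ∑ i, μ i * (astar i + t * e i)) (∑ i, μ i * e i) 0 :=
      HasDerivAt.fun_sum fun i _ => ((hasDerivAt_mul_const (e i)).const_add (astar i)).const_mul (μ i)
    have h2 : HasDerivAt (fun t : ℝ => ∑ i, ∑ j, μ i * β j *
        Real.exp ((astar i + t * e i + bstar j - C i j) / ε))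
        (∑ i, ∑ j, μ i * β j * (Real.exp ((astar i + bstar j - C i j) / ε) * (e i / ε))) 0 := by
      apply HasDerivAt.fun_sum; intro i _
      apply HasDerivAt.fun_sum; intro j _
      have hin : HasDerivAt (fun t : ℝ => (astar i + t * e i + bstar j - C i j) / ε) (e i / ε) 0 := by
        have heq : (fun t : ℝ => (astar i + t * e i + bstar j - C i j) / ε)
            = fun t : ℝ => (t * e i + (astar i + bstar j - C i j)) / ε := by
          funext t; ring
        rw [heq]
        exact ((hasDerivAt_mul_const (e i)).add_const _).div_const ε
      have hexp := (Real.hasDerivAt_exp ((astar i + 0 * e i + bstar j - C i j) / ε)).comp 0 hin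
      have := hexp.const_mul (μ i * β j)
      simpa using this
    have hc : HasDerivAt (fun _ : ℝ => (η - ε) * Real.log (∑ j, β j * Real.exp (-bstar j / (η - ε))))
        0 0 := hasDerivAt_const _ _
    have := (h1.fun_sub (h2.const_mul ε)).fun_sub hc
    simpa [hgdef, Fobj] using this
  have hzero := hlocal.hasDerivAt_eq_zero hder
  -- simplify
  have hsum1 : (∑ i, μ i * e i) = μ i0 := by
    simp [he, mul_ite, mul_one, mul_zero]
  have hsum2 : (∑ i, ∑ j, μ i * β j * (Real.exp ((astar i + bstar j - C i j) / ε) * (e i / ε)))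
      = (∑ j, μ i0 * β j * Real.exp ((astar i0 + bstar j - C i0 j) / ε)) / ε := by
    rw [Finset.sum_eq_single_of_mem i0 (Finset.mem_univ i0)]
    · rw [Finset.sum_div]
      apply Finset.sum_congr rfl
      intro j _
      simp [he]
      ring
    · intro b _ hb
      simp [he, hb]
  rw [hsum1, hsum2] at hzero
  have hεne : (ε : ℝ) ≠ 0 := ne_of_gt hε
  rw [mul_div_cancel₀ _ hεne] at hzero
  have key : μ i0 * (1 - ∑ j, β j * Real.exp ((astar i0 + bstar j - C i0 j) / ε)) = 0 := by
    rw [mul_sub, mul_one, Finset.mul_sum]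
    simp only [← mul_assoc]
    exact hzero
  have hμne := ne_of_gt (hμpos i0)
  rcases mul_eq_zero.mp key with h | h
  · exact absurd h hμne
  · linarith

lemma statB {I J : ℕ} (μ : Fin I → ℝ) (β : Fin J → ℝ) (C : Fin I → Fin J → ℝ)
    (ε η : ℝ) (hε : 0 < ε) (hεη : ε < η) (hβpos : ∀ j, 0 < β j)
    (astar : Fin I → ℝ) (bstar : Fin J → ℝ)
    (hmax : ∀ a b, Fobj μ β C ε η a b ≤ Fobj μ β C ε η astar bstar)
    (j0 : Fin J) :
    ∑ i, μ i * Real.exp ((astar i + bstar j0 - C i j0) / ε)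
      = Real.exp (-bstar j0 / (η - ε)) / ∑ k, β k * Real.exp (-bstar k / (η - ε)) := by
  classical
  have hηε : (0:ℝ) < η - ε := by linarith
  have hηεne : (η - ε) ≠ 0 := ne_of_gt hηε
  set e : Fin J → ℝ := fun j => if j = j0 then 1 else 0 with he
  set g : ℝ → ℝ := fun t => Fobj μ β C ε η astar (fun j => bstar j + t * e j) with hgdef
  have hZpos : 0 < ∑ k, β k * Real.exp (-bstar k / (η - ε)) := by
    apply Finset.sum_pos
    · intro k _; exact mul_pos (hβpos k) (Real.exp_pos _)
    · exact ⟨j0, Finset.mem_univ j0⟩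
  have hlocal : IsLocalMax g 0 := by
    apply Filter.Eventually.of_forall
    intro t
    have h0' : (fun j => bstar j + (0:ℝ) * e j) = bstar := by funext j; ring
    calc g t ≤ Fobj μ β C ε η astar bstar := hmax _ _
    _ = g 0 := by rw [hgdef]; simp only [h0']
  have hder : HasDerivAt g
      (0 - ε * ∑ i, ∑ j,
        μ i * β j * (Real.exp ((astar i + bstar j - C i j) / ε) * (e j / ε))
        - (η - ε) * ((∑ j, β j * (Real.exp (-bstar j / (η - ε)) * (-e j / (η - ε))))
            / ∑ k, β k * Real.exp (-bstar k / (η - ε)))) 0 := by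
    have h1 : HasDerivAt (fun _ : ℝ => ∑ i, μ i * astar i) 0 0 := hasDerivAt_const _ _
    have h2 : HasDerivAt (fun t : ℝ => ∑ i, ∑ j, μ i * β j *
        Real.exp ((astar i + (bstar j + t * e j) - C i j) / ε))
        (∑ i, ∑ j, μ i * β j * (Real.exp ((astar i + bstar j - C i j) / ε) * (e j / ε))) 0 := by
      apply HasDerivAt.fun_sum; intro i _
      apply HasDerivAt.fun_sum; intro j _
      have hin : HasDerivAt (fun t : ℝ => (astar i + (bstar j + t * e j) - C i j) / ε) (e j / ε) 0 := by
        have heq : (fun t : ℝ => (astar i + (bstar j + t * e j) - C i j) / ε)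
            = fun t : ℝ => (t * e j + (astar i + bstar j - C i j)) / ε := by
          funext t; ring
        rw [heq]
        exact ((hasDerivAt_mul_const (e j)).add_const _).div_const ε
      have hexp := (Real.hasDerivAt_exp ((astar i + (bstar j + 0 * e j) - C i j) / ε)).comp 0 hin
      have := hexp.const_mul (μ i * β j)
      simpa using this
    have hZ : HasDerivAt (fun t : ℝ => ∑ j, β j * Real.exp (-(bstar j + t * e j) / (η - ε)))
        (∑ j, β j * (Real.exp (-bstar j / (η - ε)) * (-e j / (η - ε)))) 0 := by
      apply HasDerivAt.fun_sum; intro j _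
      have hin : HasDerivAt (fun t : ℝ => -(bstar j + t * e j) / (η - ε)) (-e j / (η - ε)) 0 := by
        have heq : (fun t : ℝ => -(bstar j + t * e j) / (η - ε))
            = fun t : ℝ => (t * (-e j) + (-bstar j)) / (η - ε) := by
          funext t; ring
        have heq2 : (-e j / (η - ε)) = (-e j) / (η - ε) := by ring
        rw [heq, heq2]
        exact ((hasDerivAt_mul_const (-e j)).add_const _).div_const (η - ε)
      have hexp := (Real.hasDerivAt_exp (-(bstar j + 0 * e j) / (η - ε))).comp 0 hin
      have := hexp.const_mul (β j)
      simpa using this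
    have hZ0 : ∑ j, β j * Real.exp (-(bstar j + 0 * e j) / (η - ε))
        = ∑ k, β k * Real.exp (-bstar k / (η - ε)) := by simp
    have hlog := (hZ.log (by rw [hZ0]; exact ne_of_gt hZpos)).const_mul (η - ε)
    rw [hZ0] at hlog
    have := (h1.fun_sub (h2.const_mul ε)).fun_sub hlog
    simpa [hgdef, Fobj, mul_div_assoc] using this
  have hzero := hlocal.hasDerivAt_eq_zero hder
  set Z := ∑ k, β k * Real.exp (-bstar k / (η - ε)) with hZdef
  -- simplify the two sums
  have hsum2 : (∑ i, ∑ j, μ i * β j * (Real.exp ((astar i + bstar j - C i j) / ε) * (e j / ε)))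
      = (∑ i, μ i * β j0 * Real.exp ((astar i + bstar j0 - C i j0) / ε)) / ε := by
    rw [Finset.sum_div]
    apply Finset.sum_congr rfl
    intro i _
    rw [Finset.sum_eq_single_of_mem j0 (Finset.mem_univ j0)]
    · simp [he]; ring
    · intro b _ hb; simp [he, hb]
  have hsum3 : (∑ j, β j * (Real.exp (-bstar j / (η - ε)) * (-e j / (η - ε))))
      = -(β j0 * Real.exp (-bstar j0 / (η - ε))) / (η - ε) := by
    rw [Finset.sum_eq_single_of_mem j0 (Finset.mem_univ j0)]
    · simp [he]; ring
    · intro b _ hb; simp [he, hb]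
  rw [hsum2, hsum3] at hzero
  have hεne : (ε : ℝ) ≠ 0 := ne_of_gt hε
  rw [mul_div_cancel₀ _ hεne] at hzero
  have hzero2 : -(∑ i, μ i * β j0 * Real.exp ((astar i + bstar j0 - C i j0) / ε))
      + β j0 * Real.exp (-bstar j0 / (η - ε)) / Z = 0 := by
    have : (η - ε) * (-(β j0 * Real.exp (-bstar j0 / (η - ε))) / (η - ε) / Z)
        = -(β j0 * Real.exp (-bstar j0 / (η - ε)) / Z) := by
      field_simp
    rw [this] at hzero
    linarith
  have hβne := ne_of_gt (hβpos j0)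
  have hkey : β j0 * (∑ i, μ i * Real.exp ((astar i + bstar j0 - C i j0) / ε))
      = β j0 * (Real.exp (-bstar j0 / (η - ε)) / Z) := by
    rw [Finset.mul_sum]
    have : ∑ i, β j0 * (μ i * Real.exp ((astar i + bstar j0 - C i j0) / ε))
        = ∑ i, μ i * β j0 * Real.exp ((astar i + bstar j0 - C i j0) / ε) := by
      apply Finset.sum_congr rfl; intro i _; ring
    rw [this]
    rw [mul_div_assoc] at hzero2
    linarith
  exact mul_left_cancel₀ hβne hkey

/-- **bound on the dual residuals.** Any maximizer `(a*, b*)` of `F`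
satisfies `|a*_i + b*_j − C_{ij}| ≤ ε m + 2 R_C` for all `i, j`, where
`m = max_j |log(ν*_j/β_j)|` and `R_C = max C − min C`. -/
theorem dual_solution_residual_bound (I J : ℕ) (hI : 1 ≤ I) (hJ : 1 ≤ J)
    (μ : Fin I → ℝ) (hμpos : ∀ i, 0 < μ i) (hμsum : ∑ i, μ i = 1)
    (β : Fin J → ℝ) (hβpos : ∀ j, 0 < β j) (hβsum : ∑ j, β j = 1)
    (C : Fin I → Fin J → ℝ) (ε η : ℝ) (hε : 0 < ε) (hεη : ε < η)
    (astar : Fin I → ℝ) (bstar : Fin J → ℝ)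
    (hmax : ∀ (a : Fin I → ℝ) (b : Fin J → ℝ),
      Fobj μ β C ε η a b ≤ Fobj μ β C ε η astar bstar)
    (νstar : Fin J → ℝ) (hν : νstar = nuOf β ε η bstar)
    (m : ℝ) (hm : m = ⨆ j, |Real.log (νstar j / β j)|)
    (RC : ℝ) (hRC : RC = (⨆ i, ⨆ j, C i j) - ⨅ i, ⨅ j, C i j) :
    ∀ i j, |astar i + bstar j - C i j| ≤ ε * m + 2 * RC := by
  intro i j
  have : NeZero I := ⟨by omega⟩
  have : NeZero J := ⟨by omega⟩
  have hηε : (0:ℝ) < η - ε := by linarith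
  set Z := ∑ k, β k * Real.exp (-bstar k / (η - ε)) with hZdef
  have hZpos : 0 < Z := by
    apply Finset.sum_pos
    · intro k _; exact mul_pos (hβpos k) (Real.exp_pos _)
    · exact Finset.univ_nonempty
  have hA := statA μ β C ε η hε hμpos astar bstar hmax
  have hBZ := statB μ β C ε η hε hεη hβpos astar bstar hmax
  have νpos : ∀ j', 0 < νstar j' := by
    intro j'; rw [hν]
    exact div_pos (mul_pos (hβpos j') (Real.exp_pos _)) hZpos
  have hB' : ∀ j', ∑ i', μ i' * Real.exp ((astar i' + bstar j' - C i' j') / ε)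
      = νstar j' / β j' := by
    intro j'
    rw [hBZ j', hν]
    simp only [nuOf]
    rw [eq_div_iff (ne_of_gt (hβpos j'))]
    field_simp
  -- bounds from sup/inf
  have hm_ge : ∀ j', |Real.log (νstar j' / β j')| ≤ m := by
    intro j'; rw [hm]
    exact le_ciSup (f := fun j'' => |Real.log (νstar j'' / β j'')|)
      (Set.Finite.bddAbove (Set.finite_range _)) j'
  have hRCd : ∀ i1 j1 i2 j2, C i1 j1 - C i2 j2 ≤ RC := by
    intro i1 j1 i2 j2
    rw [hRC]
    have h1 : C i1 j1 ≤ ⨆ i', ⨆ j', C i' j' :=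
      le_trans (le_ciSup (f := fun j'' => C i1 j'') (Set.Finite.bddAbove (Set.finite_range _)) j1)
        (le_ciSup (f := fun i'' => ⨆ j'', C i'' j'') (Set.Finite.bddAbove (Set.finite_range _)) i1)
    have h2 : (⨅ i', ⨅ j', C i' j') ≤ C i2 j2 :=
      le_trans (ciInf_le (f := fun i'' => ⨅ j'', C i'' j'') (Set.Finite.bddBelow (Set.finite_range _)) i2)
        (ciInf_le (f := fun j'' => C i2 j'') (Set.Finite.bddBelow (Set.finite_range _)) j2)
    linarith
  have hRC0 : (0:ℝ) ≤ RC := by have := hRCd i j i j; linarith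
  -- |a_i1 - a_i2| ≤ RC
  have adiff : ∀ i1 i2, astar i1 - astar i2 ≤ RC := by
    intro i1 i2
    have hle : Real.exp ((astar i1 - astar i2 - RC) / ε)
        * (∑ j', β j' * Real.exp ((astar i2 + bstar j' - C i2 j') / ε))
        ≤ ∑ j', β j' * Real.exp ((astar i1 + bstar j' - C i1 j') / ε) := by
      rw [Finset.mul_sum]
      apply Finset.sum_le_sum
      intro j' _
      calc Real.exp ((astar i1 - astar i2 - RC) / ε)
            * (β j' * Real.exp ((astar i2 + bstar j' - C i2 j') / ε))
          = β j' * Real.exp ((astar i1 - astar i2 - RC) / ε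
              + (astar i2 + bstar j' - C i2 j') / ε) := by rw [Real.exp_add]; ring
        _ ≤ β j' * Real.exp ((astar i1 + bstar j' - C i1 j') / ε) := by
            apply mul_le_mul_of_nonneg_left _ (le_of_lt (hβpos j'))
            apply Real.exp_le_exp.2
            rw [← add_div, div_le_div_iff_of_pos_right hε]
            have := hRCd i1 j' i2 j'
            linarith
    rw [hA i1, hA i2, mul_one] at hle
    have h0 := Real.exp_le_one_iff.mp hle
    have h1 := mul_le_mul_of_nonneg_right h0 (le_of_lt hε)
    rw [div_mul_cancel₀ _ (ne_of_gt hε), zero_mul] at h1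
    linarith
  -- existence of i1, i2
  set s := Real.log (νstar j / β j) with hsdef
  have hratio : νstar j / β j = Real.exp s :=
    (Real.exp_log (div_pos (νpos j) (hβpos j))).symm
  have hBj : ∑ i', μ i' * Real.exp ((astar i' + bstar j - C i' j) / ε) = Real.exp s := by
    rw [hB' j, hratio]
  have hex1 : ∃ i1, Real.exp ((astar i1 + bstar j - C i1 j) / ε) ≤ Real.exp s := by
    by_contra h
    push_neg at h
    have hlt : ∑ i', μ i' * Real.exp s
        < ∑ i', μ i' * Real.exp ((astar i' + bstar j - C i' j) / ε) :=
      Finset.sum_lt_sum_of_nonempty Finset.univ_nonempty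
        (fun i' _ => mul_lt_mul_of_pos_left (h i') (hμpos i'))
    rw [← Finset.sum_mul, hμsum, one_mul, hBj] at hlt
    exact lt_irrefl _ hlt
  have hex2 : ∃ i2, Real.exp s ≤ Real.exp ((astar i2 + bstar j - C i2 j) / ε) := by
    by_contra h
    push_neg at h
    have hlt : ∑ i', μ i' * Real.exp ((astar i' + bstar j - C i' j) / ε)
        < ∑ i', μ i' * Real.exp s :=
      Finset.sum_lt_sum_of_nonempty Finset.univ_nonempty
        (fun i' _ => mul_lt_mul_of_pos_left (h i') (hμpos i'))
    rw [← Finset.sum_mul, hμsum, one_mul, hBj] at hlt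
    exact lt_irrefl _ hlt
  obtain ⟨i1, h1⟩ := hex1
  obtain ⟨i2, h2⟩ := hex2
  have hr1 : astar i1 + bstar j - C i1 j ≤ ε * s := by
    have := Real.exp_le_exp.mp h1
    have := (div_le_iff₀ hε).mp this
    linarith [this]
  have hr2 : ε * s ≤ astar i2 + bstar j - C i2 j := by
    have := Real.exp_le_exp.mp h2
    have := (le_div_iff₀ hε).mp this
    linarith [this]
  have hsm : ε * s ≤ ε * m :=
    mul_le_mul_of_nonneg_left (le_trans (le_abs_self s) (hm_ge j)) (le_of_lt hε)
  have hsm' : -(ε * m) ≤ ε * s := by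
    have : -s ≤ m := le_trans (neg_le_abs s) (hm_ge j)
    nlinarith
  rw [abs_le]
  constructor
  · -- lower bound
    have had := adiff i2 i
    have hcd := hRCd i j i2 j
    linarith
  · -- upper bound
    have had := adiff i i1
    have hcd := hRCd i1 j i j
    linarith
end

section
/- Let I, J ≥ 1 be integers, let μ ∈ ℝ^I and β ∈ ℝ^J be probability vectors with all entries strictly positive, let C ∈ ℝ^{I×J}, and let ε > 0, η > ε. Define F(a,b) = Σ_i μ_i a_i − ε Σ_{i,j} μ_i β_j exp((a_i + b_j − C_{ij})/ε) − (η−ε) log(Σ_j β_j exp(−b_j/(η−ε))) for (a,b) ∈ ℝ^I × ℝ^J. Let B ≥ 0, and define λ = (min_{i,j}{μ_i, β_j} / ε) · exp(−B/ε). Let K be the convex set of points (a,b) ∈ ℝ^I × ℝ^J such that a_i + b_j − C_{ij} ≥ −B for all i, j, and Σ_i μ_i a_i = Σ_j β_j b_j. Then −F is λ-strongly convex on K: for all (a,b), (a',b') ∈ K and all t ∈ [0,1], F(t(a,b) + (1−t)(a',b')) ≥ t F(a,b) + (1−t) F(a',b') + (λ/2) t(1−t) (‖a−a'‖² + ‖b−b'‖²),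 where ‖·‖ is the Euclidean norm. -/
open Real BigOperators Finset

lemma exp_sub_sq_convexOn (c : ℝ) :
    ConvexOn ℝ (Set.Ici c) (fun s : ℝ => Real.exp s - Real.exp c / 2 * s ^ 2) := by
  apply convexOn_of_hasDerivWithinAt2_nonneg (convex_Ici c) (f' := fun s => Real.exp s - Real.exp c * s)
    (f'' := fun s => Real.exp s - Real.exp c)
  · fun_prop
  · intro x hx
    have : HasDerivAt (fun s : ℝ => Real.exp s - Real.exp c / 2 * s ^ 2)
        (Real.exp x - Real.exp c * x) x := by
      have h1 := Real.hasDerivAt_exp x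
      have h2 : HasDerivAt (fun s : ℝ => Real.exp c / 2 * s ^ 2) (Real.exp c * x) x := by
        have := (hasDerivAt_pow 2 x).const_mul (Real.exp c / 2)
        exact this.congr_deriv (by norm_num; ring)
      exact h1.sub h2
    exact this.hasDerivWithinAt
  · intro x hx
    have : HasDerivAt (fun s : ℝ => Real.exp s - Real.exp c * s)
        (Real.exp x - Real.exp c) x := by
      have h2 : HasDerivAt (fun s : ℝ => Real.exp c * s) (Real.exp c) x := by
        simpa using (hasDerivAt_id x).const_mul (Real.exp c)
      exact (Real.hasDerivAt_exp x).sub h2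
    exact this.hasDerivWithinAt
  · intro x hx
    rw [interior_Ici] at hx
    have := Real.exp_le_exp.2 (le_of_lt hx)
    simpa using this

lemma exp_strong_convex {c x y t : ℝ} (hx : c ≤ x) (hy : c ≤ y)
    (ht : 0 ≤ t) (ht' : t ≤ 1) :
    Real.exp (t * x + (1 - t) * y) + Real.exp c / 2 * (t * (1 - t) * (x - y) ^ 2)
      ≤ t * Real.exp x + (1 - t) * Real.exp y := by
  have h := (exp_sub_sq_convexOn c).2 hx hy ht (sub_nonneg.2 ht') (by ring)
  simp only [smul_eq_mul] at h
  nlinarith [h]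

lemma lse_convex {J : ℕ} (β : Fin J → ℝ) (hβ : ∀ j, 0 < β j) (hJ : 1 ≤ J)
    (y y' : Fin J → ℝ) {t : ℝ} (ht : 0 ≤ t) (ht' : t ≤ 1) :
    Real.log (∑ j, β j * Real.exp (t * y j + (1 - t) * y' j)) ≤
      t * Real.log (∑ j, β j * Real.exp (y j)) +
        (1 - t) * Real.log (∑ j, β j * Real.exp (y' j)) := by
  have hne : (Finset.univ : Finset (Fin J)).Nonempty := by
    have : Nonempty (Fin J) := Fin.pos_iff_nonempty.mp hJ
    exact univ_nonempty
  have hS : 0 < ∑ j, β j * Real.exp (y j) :=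
    Finset.sum_pos (fun j _ => mul_pos (hβ j) (Real.exp_pos _)) hne
  have hS' : 0 < ∑ j, β j * Real.exp (y' j) :=
    Finset.sum_pos (fun j _ => mul_pos (hβ j) (Real.exp_pos _)) hne
  set S := ∑ j, β j * Real.exp (y j) with hSdef
  set S' := ∑ j, β j * Real.exp (y' j) with hS'def
  have key : ∑ j, β j * Real.exp (t * y j + (1 - t) * y' j) ≤ S ^ t * S' ^ (1 - t) := by
    have hterm : ∀ j : Fin J, β j * Real.exp (t * y j + (1 - t) * y' j) ≤
        S ^ t * S' ^ (1 - t) * (β j * (t * (Real.exp (y j) / S) + (1 - t) * (Real.exp (y' j) / S'))) := by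
      intro j
      have hgm : (Real.exp (y j) / S) ^ t * (Real.exp (y' j) / S') ^ (1 - t) ≤
          t * (Real.exp (y j) / S) + (1 - t) * (Real.exp (y' j) / S') :=
        Real.geom_mean_le_arith_mean2_weighted ht (by linarith)
          (le_of_lt (div_pos (Real.exp_pos _) hS)) (le_of_lt (div_pos (Real.exp_pos _) hS')) (by ring)
      have hexp : Real.exp (t * y j + (1 - t) * y' j)
          = S ^ t * S' ^ (1 - t) * ((Real.exp (y j) / S) ^ t * (Real.exp (y' j) / S') ^ (1 - t)) := by
        rw [Real.div_rpow (le_of_lt (Real.exp_pos _)) hS.le,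
          Real.div_rpow (le_of_lt (Real.exp_pos _)) hS'.le,
          ← Real.exp_mul, ← Real.exp_mul, mul_comm (y j) t, mul_comm (y' j) (1 - t)]
        rw [Real.exp_add]
        field_simp
      rw [hexp]
      have hpos : 0 ≤ β j * (S ^ t * S' ^ (1 - t)) :=
        mul_nonneg (hβ j).le (mul_nonneg (Real.rpow_nonneg hS.le t) (Real.rpow_nonneg hS'.le _))
      calc β j * (S ^ t * S' ^ (1 - t) * ((Real.exp (y j) / S) ^ t * (Real.exp (y' j) / S') ^ (1 - t)))
          = β j * (S ^ t * S' ^ (1 - t)) * ((Real.exp (y j) / S) ^ t * (Real.exp (y' j) / S') ^ (1 - t)) := by ring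
        _ ≤ β j * (S ^ t * S' ^ (1 - t)) * (t * (Real.exp (y j) / S) + (1 - t) * (Real.exp (y' j) / S')) :=
            mul_le_mul_of_nonneg_left hgm hpos
        _ = S ^ t * S' ^ (1 - t) * (β j * (t * (Real.exp (y j) / S) + (1 - t) * (Real.exp (y' j) / S'))) := by ring
    calc ∑ j, β j * Real.exp (t * y j + (1 - t) * y' j)
        ≤ ∑ j, S ^ t * S' ^ (1 - t) * (β j * (t * (Real.exp (y j) / S) + (1 - t) * (Real.exp (y' j) / S'))) :=
          Finset.sum_le_sum (fun j _ => hterm j)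
      _ = S ^ t * S' ^ (1 - t) * (t * ((∑ j, β j * Real.exp (y j)) / S) + (1 - t) * ((∑ j, β j * Real.exp (y' j)) / S')) := by
          rw [← Finset.mul_sum]
          congr 1
          rw [Finset.sum_div, Finset.sum_div, Finset.mul_sum, Finset.mul_sum, ← Finset.sum_add_distrib]
          apply Finset.sum_congr rfl
          intro j _
          ring
      _ = S ^ t * S' ^ (1 - t) := by
          rw [← hSdef, ← hS'def, div_self hS.ne', div_self hS'.ne']
          ring
  calc Real.log (∑ j, β j * Real.exp (t * y j + (1 - t) * y' j))
      ≤ Real.log (S ^ t * S' ^ (1 - t)) :=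
        Real.log_le_log (Finset.sum_pos (fun j _ => mul_pos (hβ j) (Real.exp_pos _)) hne) key
    _ = t * Real.log S + (1 - t) * Real.log S' := by
        rw [Real.log_mul (Real.rpow_pos_of_pos hS t).ne' (Real.rpow_pos_of_pos hS' _).ne',
          Real.log_rpow hS, Real.log_rpow hS']

lemma quad_identity {I J : ℕ} (μ : Fin I → ℝ) (β : Fin J → ℝ)
    (hμsum : ∑ i, μ i = 1) (hβsum : ∑ j, β j = 1) (u : Fin I → ℝ) (v : Fin J → ℝ) :
    ∑ i, ∑ j, μ i * β j * (u i + v j) ^ 2 =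
      ∑ i, μ i * u i ^ 2 + ∑ j, β j * v j ^ 2 +
        2 * (∑ i, μ i * u i) * (∑ j, β j * v j) := by
  have hrow : ∀ i, ∑ j, μ i * β j * (u i + v j) ^ 2 =
      μ i * u i ^ 2 + 2 * (μ i * u i) * (∑ j, β j * v j) + μ i * (∑ j, β j * v j ^ 2) := by
    intro i
    have hterm : ∀ j, μ i * β j * (u i + v j) ^ 2 =
        μ i * u i ^ 2 * β j + 2 * (μ i * u i) * (β j * v j) + μ i * (β j * v j ^ 2) :=
      fun j => by ring
    rw [Finset.sum_congr rfl fun j _ => hterm j, Finset.sum_add_distrib,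
      Finset.sum_add_distrib, ← Finset.mul_sum, ← Finset.mul_sum, ← Finset.mul_sum, hβsum,
      mul_one]
  calc ∑ i, ∑ j, μ i * β j * (u i + v j) ^ 2
      = ∑ i, (μ i * u i ^ 2 + 2 * (μ i * u i) * (∑ j, β j * v j)
          + μ i * (∑ j, β j * v j ^ 2)) := Finset.sum_congr rfl fun i _ => hrow i
    _ = ∑ i, μ i * u i ^ 2 + (∑ i, 2 * (μ i * u i)) * (∑ j, β j * v j)
          + (∑ i, μ i) * (∑ j, β j * v j ^ 2) := by
        rw [Finset.sum_add_distrib, Finset.sum_add_distrib, ← Finset.sum_mul, ← Finset.sum_mul]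
    _ = _ := by
        rw [hμsum, one_mul, show (∑ i, 2 * (μ i * u i)) = 2 * ∑ i, μ i * u i from by
          rw [← Finset.mul_sum]]
        ring

set_option maxHeartbeats 1000000 in
/-- **strong concavity on the slice.** On the set of `(a, b)` with
`a_i + b_j − C_{ij} ≥ −B` and `∑ μ_i a_i = ∑ β_j b_j`, the function `−F` is
`λ`-strongly convex with `λ = (min{μ_i, β_j}/ε) e^{−B/ε}` (Euclidean norm). -/
theorem neg_dual_objective_strongly_convex (I J : ℕ) (hI : 1 ≤ I) (hJ : 1 ≤ J)
    (μ : Fin I → ℝ) (hμpos : ∀ i, 0 < μ i) (hμsum : ∑ i, μ i = 1)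
    (β : Fin J → ℝ) (hβpos : ∀ j, 0 < β j) (hβsum : ∑ j, β j = 1)
    (C : Fin I → Fin J → ℝ) (ε η : ℝ) (hε : 0 < ε) (hεη : ε < η)
    (B : ℝ) (hB : 0 ≤ B)
    (lam : ℝ) (hlam : lam = min (⨅ i, μ i) (⨅ j, β j) / ε * Real.exp (-B / ε)) :
    ∀ (a : Fin I → ℝ) (b : Fin J → ℝ) (a' : Fin I → ℝ) (b' : Fin J → ℝ),
      (∀ i j, -B ≤ a i + b j - C i j) → (∑ i, μ i * a i = ∑ j, β j * b j) →
      (∀ i j, -B ≤ a' i + b' j - C i j) → (∑ i, μ i * a' i = ∑ j, β j * b' j) →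
      ∀ t : ℝ, 0 ≤ t → t ≤ 1 →
        Fobj μ β C ε η (fun i => t * a i + (1 - t) * a' i)
            (fun j => t * b j + (1 - t) * b' j) ≥
          t * Fobj μ β C ε η a b + (1 - t) * Fobj μ β C ε η a' b' +
            lam / 2 * t * (1 - t) *
              (∑ i, (a i - a' i) ^ 2 + ∑ j, (b j - b' j) ^ 2) := by
  intro a b a' b' hab hsuma hab' hsuma' t ht ht'
  have hηε : (0:ℝ) < η - ε := by linarith
  have hIne : Nonempty (Fin I) := Fin.pos_iff_nonempty.mp hI
  have hJne : Nonempty (Fin J) := Fin.pos_iff_nonempty.mp hJ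
  have hmμ : ∀ i, min (⨅ i, μ i) (⨅ j, β j) ≤ μ i := fun i =>
    le_trans (min_le_left _ _) (ciInf_le (Set.finite_range μ).bddBelow i)
  have hmβ : ∀ j, min (⨅ i, μ i) (⨅ j, β j) ≤ β j := fun j =>
    le_trans (min_le_right _ _) (ciInf_le (Set.finite_range β).bddBelow j)
  -- per-term strong convexity of the exponential part
  have per : ∀ (i : Fin I) (j : Fin J),
      μ i * β j * Real.exp (t * ((a i + b j - C i j) / ε)
          + (1 - t) * ((a' i + b' j - C i j) / ε))
        + Real.exp (-B / ε) / 2 * t * (1 - t) *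
            (μ i * β j * ((a i - a' i + (b j - b' j)) / ε) ^ 2)
      ≤ t * (μ i * β j * Real.exp ((a i + b j - C i j) / ε))
        + (1 - t) * (μ i * β j * Real.exp ((a' i + b' j - C i j) / ε)) := by
    intro i j
    have hx : -B / ε ≤ (a i + b j - C i j) / ε := by gcongr ?_ / ε; exact hab i j
    have hx' : -B / ε ≤ (a' i + b' j - C i j) / ε := by gcongr ?_ / ε; exact hab' i j
    have h := mul_le_mul_of_nonneg_left (exp_strong_convex hx hx' ht ht')
      (mul_nonneg (hμpos i).le (hβpos j).le)
    have hd : (a i - a' i + (b j - b' j)) / ε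
        = (a i + b j - C i j) / ε - (a' i + b' j - C i j) / ε := by
      field_simp; ring
    rw [hd]
    nlinarith [h]
  -- summed version
  have hexp_key :
      (∑ i, ∑ j, μ i * β j * Real.exp (t * ((a i + b j - C i j) / ε)
          + (1 - t) * ((a' i + b' j - C i j) / ε)))
        + Real.exp (-B / ε) / 2 * t * (1 - t) *
            (∑ i, ∑ j, μ i * β j * ((a i - a' i + (b j - b' j)) / ε) ^ 2)
      ≤ t * (∑ i, ∑ j, μ i * β j * Real.exp ((a i + b j - C i j) / ε))
        + (1 - t) * (∑ i, ∑ j, μ i * β j * Real.exp ((a' i + b' j - C i j) / ε)) := by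
    have c1 : Real.exp (-B / ε) / 2 * t * (1 - t) *
        (∑ i, ∑ j, μ i * β j * ((a i - a' i + (b j - b' j)) / ε) ^ 2)
        = ∑ i, ∑ j, Real.exp (-B / ε) / 2 * t * (1 - t) *
            (μ i * β j * ((a i - a' i + (b j - b' j)) / ε) ^ 2) := by
      rw [Finset.mul_sum]
      exact Finset.sum_congr rfl fun i _ => Finset.mul_sum _ _ _
    have c2 : t * (∑ i, ∑ j, μ i * β j * Real.exp ((a i + b j - C i j) / ε))
        = ∑ i, ∑ j, t * (μ i * β j * Real.exp ((a i + b j - C i j) / ε)) := by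
      rw [Finset.mul_sum]
      exact Finset.sum_congr rfl fun i _ => Finset.mul_sum _ _ _
    have c3 : (1 - t) * (∑ i, ∑ j, μ i * β j * Real.exp ((a' i + b' j - C i j) / ε))
        = ∑ i, ∑ j, (1 - t) * (μ i * β j * Real.exp ((a' i + b' j - C i j) / ε)) := by
      rw [Finset.mul_sum]
      exact Finset.sum_congr rfl fun i _ => Finset.mul_sum _ _ _
    rw [c1, c2, c3]
    simp only [← Finset.sum_add_distrib]
    exact Finset.sum_le_sum fun i _ => Finset.sum_le_sum fun j _ => per i j
  -- the quadratic lower bound using the slice constraint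
  have hc : ∑ i, μ i * (a i - a' i) = ∑ j, β j * (b j - b' j) := by
    have e1 : ∑ i, μ i * (a i - a' i) = (∑ i, μ i * a i) - ∑ i, μ i * a' i := by
      rw [← Finset.sum_sub_distrib]; exact Finset.sum_congr rfl fun i _ => by ring
    have e2 : ∑ j, β j * (b j - b' j) = (∑ j, β j * b j) - ∑ j, β j * b' j := by
      rw [← Finset.sum_sub_distrib]; exact Finset.sum_congr rfl fun j _ => by ring
    rw [e1, e2, hsuma, hsuma']
  have hQid := quad_identity μ β hμsum hβsum (fun i => a i - a' i) (fun j => b j - b' j)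
  have hQbound : min (⨅ i, μ i) (⨅ j, β j) * (∑ i, (a i - a' i) ^ 2 + ∑ j, (b j - b' j) ^ 2)
      ≤ ∑ i, ∑ j, μ i * β j * (a i - a' i + (b j - b' j)) ^ 2 := by
    have h1 : min (⨅ i, μ i) (⨅ j, β j) * ∑ i, (a i - a' i) ^ 2
        ≤ ∑ i, μ i * (a i - a' i) ^ 2 := by
      rw [Finset.mul_sum]
      exact Finset.sum_le_sum fun i _ => mul_le_mul_of_nonneg_right (hmμ i) (sq_nonneg _)
    have h2 : min (⨅ i, μ i) (⨅ j, β j) * ∑ j, (b j - b' j) ^ 2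
        ≤ ∑ j, β j * (b j - b' j) ^ 2 := by
      rw [Finset.mul_sum]
      exact Finset.sum_le_sum fun j _ => mul_le_mul_of_nonneg_right (hmβ j) (sq_nonneg _)
    have hcc : 0 ≤ 2 * (∑ i, μ i * (a i - a' i)) * (∑ j, β j * (b j - b' j)) := by
      rw [hc]; nlinarith [sq_nonneg (∑ j, β j * (b j - b' j))]
    rw [hQid]
    nlinarith [h1, h2, hcc]
  -- relate the two quadratic sums
  have hQ'eq : (∑ i, ∑ j, μ i * β j * ((a i - a' i + (b j - b' j)) / ε) ^ 2)
      = (∑ i, ∑ j, μ i * β j * (a i - a' i + (b j - b' j)) ^ 2) / ε ^ 2 := by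
    rw [Finset.sum_div]
    refine Finset.sum_congr rfl fun i _ => ?_
    rw [Finset.sum_div]
    refine Finset.sum_congr rfl fun j _ => ?_
    rw [div_pow]; ring
  -- the lam-term bound
  have hlam2 : lam / 2 * t * (1 - t) * (∑ i, (a i - a' i) ^ 2 + ∑ j, (b j - b' j) ^ 2)
      ≤ ε * (Real.exp (-B / ε) / 2 * t * (1 - t) *
          (∑ i, ∑ j, μ i * β j * ((a i - a' i + (b j - b' j)) / ε) ^ 2)) := by
    have hfac : 0 ≤ Real.exp (-B / ε) * t * (1 - t) / (2 * ε) :=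
      div_nonneg (mul_nonneg (mul_nonneg (Real.exp_pos _).le ht) (by linarith)) (by positivity)
    have h5 := mul_le_mul_of_nonneg_left hQbound hfac
    calc lam / 2 * t * (1 - t) * (∑ i, (a i - a' i) ^ 2 + ∑ j, (b j - b' j) ^ 2)
        = Real.exp (-B / ε) * t * (1 - t) / (2 * ε) *
            (min (⨅ i, μ i) (⨅ j, β j) * (∑ i, (a i - a' i) ^ 2 + ∑ j, (b j - b' j) ^ 2)) := by
          rw [hlam]; field_simp
      _ ≤ Real.exp (-B / ε) * t * (1 - t) / (2 * ε) *
            (∑ i, ∑ j, μ i * β j * (a i - a' i + (b j - b' j)) ^ 2) := h5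
      _ = ε * (Real.exp (-B / ε) / 2 * t * (1 - t) *
            (∑ i, ∑ j, μ i * β j * ((a i - a' i + (b j - b' j)) / ε) ^ 2)) := by
          rw [hQ'eq]; field_simp
  -- the log-sum-exp concavity
  have hlse := lse_convex β hβpos hJ (fun j => -b j / (η - ε)) (fun j => -b' j / (η - ε)) ht ht'
  have hlse2 := mul_le_mul_of_nonneg_left hlse hηε.le
  -- the linear term
  have hlin : ∑ i, μ i * (t * a i + (1 - t) * a' i)
      = t * ∑ i, μ i * a i + (1 - t) * ∑ i, μ i * a' i := by
    rw [Finset.mul_sum, Finset.mul_sum, ← Finset.sum_add_distrib]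
    exact Finset.sum_congr rfl fun i _ => by ring
  -- rewrite the midpoint arguments
  have harg : ∀ (i : Fin I) (j : Fin J),
      (t * a i + (1 - t) * a' i + (t * b j + (1 - t) * b' j) - C i j) / ε
        = t * ((a i + b j - C i j) / ε) + (1 - t) * ((a' i + b' j - C i j) / ε) := by
    intro i j; field_simp; ring
  have hargb : ∀ (j : Fin J),
      -(t * b j + (1 - t) * b' j) / (η - ε)
        = t * (-b j / (η - ε)) + (1 - t) * (-b' j / (η - ε)) := by
    intro j; field_simp; ring
  simp only [Fobj, harg, hargb, hlin]
  have hexp2 := mul_le_mul_of_nonneg_left hexp_key hε.le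
  linarith [hexp2, hlse2, hlam2]
end

section
/- Let J ≥ 1 be an integer, let β ∈ ℝ^J be a probability vector with all entries strictly positive, let ε > 0, η > ε, and define ν(b)_j = β_j exp(−b_j/(η−ε)) / Σ_k β_k exp(−b_k/(η−ε)) for b ∈ ℝ^J. Then for all b, b' ∈ ℝ^J: KL(ν(b'), ν(b)) ≤ ‖b − b'‖² / (2(η−ε)²), where ‖·‖ is the Euclidean norm and KL(p,q) = Σ_j p_j log(p_j/q_j). -/
open Real BigOperators Finset

lemma lse_bound {J : ℕ} (hJ : 0 < J) (p u : Fin J → ℝ) (hp : ∀ j, 0 < p j)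
    (hps : ∑ j, p j = 1) :
    Real.log (∑ j, p j * Real.exp (u j)) ≤ ∑ j, p j * u j + (∑ j, u j ^ 2) / 2 := by
  haveI : Nonempty (Fin J) := ⟨⟨0, hJ⟩⟩
  set S : ℝ → ℝ := fun t => ∑ j, p j * Real.exp (t * u j) with hS
  set S₁ : ℝ → ℝ := fun t => ∑ j, p j * u j * Real.exp (t * u j) with hS₁
  set S₂ : ℝ → ℝ := fun t => ∑ j, p j * u j ^ 2 * Real.exp (t * u j) with hS₂
  set c : ℝ := ∑ j, p j * u j with hc
  set K : ℝ := ∑ j, u j ^ 2 with hK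
  have hSpos : ∀ t, 0 < S t := fun t =>
    Finset.sum_pos (fun j _ => mul_pos (hp j) (Real.exp_pos _)) univ_nonempty
  have hS0 : S 0 = 1 := by simp [hS, hps]
  have hS₁0 : S₁ 0 = c := by simp [hS₁, hc]
  have hdS : ∀ t, HasDerivAt S (S₁ t) t := by
    intro t
    apply HasDerivAt.fun_sum
    intro j _
    have h1 : HasDerivAt (fun t : ℝ => t * u j) (u j) t := hasDerivAt_mul_const (u j)
    have h2 := (h1.exp).const_mul (p j)
    exact h2.congr_deriv (by ring)
  have hdS₁ : ∀ t, HasDerivAt S₁ (S₂ t) t := by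
    intro t
    apply HasDerivAt.fun_sum
    intro j _
    have h1 : HasDerivAt (fun t : ℝ => t * u j) (u j) t := hasDerivAt_mul_const (u j)
    have h2 := (h1.exp).const_mul (p j * u j)
    exact h2.congr_deriv (by ring)
  have hdg : ∀ t, HasDerivAt (fun t => S₁ t / S t)
      ((S₂ t * S t - S₁ t * S₁ t) / (S t) ^ 2) t := fun t =>
    (hdS₁ t).div (hdS t) (hSpos t).ne'
  have hgK : ∀ t, (S₂ t * S t - S₁ t * S₁ t) / (S t) ^ 2 ≤ K := by
    intro t
    have hterm : ∀ j, p j * Real.exp (t * u j) ≤ S t := fun j =>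
      Finset.single_le_sum (f := fun j => p j * Real.exp (t * u j))
        (fun j _ => le_of_lt (mul_pos (hp j) (Real.exp_pos _))) (mem_univ j)
    have hS2 : S₂ t ≤ K * S t := by
      rw [hK, Finset.sum_mul]
      apply Finset.sum_le_sum
      intro j _
      have h : p j * u j ^ 2 * Real.exp (t * u j) = u j ^ 2 * (p j * Real.exp (t * u j)) := by
        ring
      rw [h]
      exact mul_le_mul_of_nonneg_left (hterm j) (sq_nonneg _)
    rw [div_le_iff₀ (pow_pos (hSpos t) 2)]
    nlinarith [sq_nonneg (S₁ t), mul_le_mul_of_nonneg_right hS2 (hSpos t).le]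
  -- F t = K t - (g t - c) is monotone on ℝ
  set F : ℝ → ℝ := fun t => K * t - (S₁ t / S t - c) with hFdef
  have hdF : ∀ s, HasDerivAt F (K - (S₂ s * S s - S₁ s * S₁ s) / (S s) ^ 2) s := by
    intro s
    have h := ((hasDerivAt_id s).const_mul K).sub ((hdg s).sub_const c)
    exact h.congr_deriv (by ring)
  have hFmono : Monotone F := by
    apply monotone_of_deriv_nonneg (fun s => (hdF s).differentiableAt)
    intro s
    rw [(hdF s).deriv]
    linarith [hgK s]
  have hgbound : ∀ t : ℝ, 0 ≤ t → S₁ t / S t - c ≤ K * t := by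
    intro t ht
    have h0 : F 0 = 0 := by simp [hFdef, hS₁0, hS0]
    have := hFmono ht
    rw [h0] at this
    simp only [hFdef] at this
    linarith
  -- φ t = log (S t) - t c - K t²/2 antitone on [0,1]
  set φ : ℝ → ℝ := fun t => Real.log (S t) - t * c - K * t ^ 2 / 2 with hφ
  have hdφ : ∀ t, HasDerivAt φ (S₁ t / S t - c - K * t) t := by
    intro t
    have h1 : HasDerivAt (fun t => Real.log (S t)) (S₁ t / S t) t :=
      (hdS t).log (hSpos t).ne'
    have h2 : HasDerivAt (fun t : ℝ => t * c) c t := hasDerivAt_mul_const c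
    have h3 : HasDerivAt (fun t : ℝ => K * t ^ 2 / 2) (K * t) t := by
      have := ((hasDerivAt_pow 2 t).const_mul K).div_const 2
      exact this.congr_deriv (by norm_num; ring)
    exact (h1.sub h2).sub h3
  have hanti : AntitoneOn φ (Set.Icc 0 1) := by
    apply antitoneOn_of_deriv_nonpos (convex_Icc 0 1)
    · exact fun x _ => ((hdφ x).differentiableAt).continuousAt.continuousWithinAt
    · exact fun x _ => ((hdφ x).differentiableAt).differentiableWithinAt
    · intro x hx
      rw [interior_Icc] at hx
      rw [(hdφ x).deriv]
      linarith [hgbound x hx.1.le]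
  have hkey : φ 1 ≤ φ 0 := hanti (Set.left_mem_Icc.2 zero_le_one)
    (Set.right_mem_Icc.2 zero_le_one) zero_le_one
  have hφ0 : φ 0 = 0 := by simp [hφ, hS0]
  have hS1 : S 1 = ∑ j, p j * Real.exp (u j) := by simp [hS]
  rw [hφ0] at hkey
  simp only [hφ, hS1, one_mul, one_pow] at hkey
  linarith

/-- **quadratic KL bound between softmax measures.**
`KL(ν(b'), ν(b)) ≤ ‖b − b'‖² / (2(η−ε)²)` for the Euclidean norm. -/
theorem kl_softmax_quadratic_bound (J : ℕ) (hJ : 1 ≤ J)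
    (β : Fin J → ℝ) (hβpos : ∀ j, 0 < β j) (hβsum : ∑ j, β j = 1)
    (ε η : ℝ) (hε : 0 < ε) (hεη : ε < η) :
    ∀ b b' : Fin J → ℝ,
      ∑ j, nuOf β ε η b' j * Real.log (nuOf β ε η b' j / nuOf β ε η b j) ≤
        (∑ j, (b j - b' j) ^ 2) / (2 * (η - ε) ^ 2) := by
  intro b b'
  haveI : Nonempty (Fin J) := ⟨⟨0, hJ⟩⟩
  set τ : ℝ := η - ε with hτ
  have hτpos : 0 < τ := by simp [hτ]; linarith
  set u : Fin J → ℝ := fun j => (b' j - b j) / τ with hu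
  set p : Fin J → ℝ := nuOf β ε η b' with hpdef
  have hZ' : 0 < ∑ k, β k * Real.exp (-b' k / τ) :=
    Finset.sum_pos (fun k _ => mul_pos (hβpos k) (Real.exp_pos _)) univ_nonempty
  have hZ : 0 < ∑ k, β k * Real.exp (-b k / τ) :=
    Finset.sum_pos (fun k _ => mul_pos (hβpos k) (Real.exp_pos _)) univ_nonempty
  have hppos : ∀ j, 0 < p j := fun j =>
    div_pos (mul_pos (hβpos j) (Real.exp_pos _)) hZ'
  have hpsum : ∑ j, p j = 1 := by
    simp only [hpdef, nuOf]
    rw [← Finset.sum_div, div_self hZ'.ne']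
  -- key algebraic identity
  have hpe : ∀ j, p j * Real.exp (u j) = β j * Real.exp (-b j / τ) /
      ∑ k, β k * Real.exp (-b' k / τ) := by
    intro j
    simp only [hpdef, nuOf, hu, ← hτ]
    rw [div_mul_eq_mul_div, mul_assoc, ← Real.exp_add]
    have he : -b' j / τ + (b' j - b j) / τ = -b j / τ := by field_simp; ring
    rw [he]
  set S : ℝ := ∑ j, p j * Real.exp (u j) with hSdef
  have hSval : S = (∑ k, β k * Real.exp (-b k / τ)) / ∑ k, β k * Real.exp (-b' k / τ) := by
    rw [hSdef]
    simp_rw [hpe]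
    rw [← Finset.sum_div]
  have hSpos : 0 < S := by rw [hSval]; positivity
  have hnu : ∀ j, nuOf β ε η b j = p j * Real.exp (u j) / S := by
    intro j
    rw [hpe j, hSval, nuOf, ← hτ]
    field_simp
    have hZ'' := hZ'.ne'
    simp only [neg_div] at hZ''
    exact (mul_div_mul_right _ _ hZ'').symm
  -- rewrite the KL sum
  have hlog : ∀ j, Real.log (p j / nuOf β ε η b j) = Real.log S - u j := by
    intro j
    rw [hnu j]
    have h1 : p j / (p j * Real.exp (u j) / S) = S / Real.exp (u j) := by
      rw [div_div_eq_mul_div, mul_div_mul_left _ _ (hppos j).ne']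
    rw [h1, Real.log_div hSpos.ne' (Real.exp_ne_zero _), Real.log_exp]
  calc ∑ j, p j * Real.log (p j / nuOf β ε η b j)
      = ∑ j, p j * (Real.log S - u j) := by
        exact Finset.sum_congr rfl fun j _ => by rw [hlog j]
    _ = Real.log S - ∑ j, p j * u j := by
        simp_rw [mul_sub, Finset.sum_sub_distrib, ← Finset.sum_mul, hpsum, one_mul]
    _ ≤ (∑ j, u j ^ 2) / 2 := by
        have := lse_bound (by omega) p u hppos hpsum
        linarith
    _ = (∑ j, (b j - b' j) ^ 2) / (2 * τ ^ 2) := by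
        have : ∀ j, u j ^ 2 = (b j - b' j) ^ 2 / τ ^ 2 := by
          intro j; rw [hu]; rw [div_pow]; ring_nf
        simp_rw [this, ← Finset.sum_div]
        rw [div_div, mul_comm]
end
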